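/- arXiv:1811.02207 — 10 statements merged into one kernel-verified Lean document; each statement's English description precedes it below -/
import Mathlib

section
/- Let d ≥ 1, 𝐤 ∈ ℕ_{>0}^d, and 0 ≤ l ≤ k. Define 𝒦_l := Σ_{𝐚 ≼ 𝐤, 1≤|𝐚|≤l} |𝐚| and n_l := #{𝐚 ∈ ℕ^d : 𝐚 ≼ 𝐤, 1 ≤ |𝐚| ≤ l} (where for l > max degree one still restricts |𝐚| ≤ l). Then 𝒦_l / 𝒦_k ≤ n_l / n_k, equivalently 𝒦_l · n_k ≤ n_l · 𝒦_k. -/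
open Finset

lemma aux_avg {α : Type*} [DecidableEq α] (T : Finset α) (w : α → ℕ) (l : ℕ) :
    (∑ a ∈ T.filter (fun a => w a ≤ l), w a) * T.card
      ≤ (T.filter (fun a => w a ≤ l)).card * ∑ a ∈ T, w a := by
  classical
  set S := T.filter (fun a => w a ≤ l) with hS
  have hsplit : ∑ a ∈ T, w a = (∑ a ∈ S, w a) + ∑ a ∈ T.filter (fun a => ¬ w a ≤ l), w a :=
    (Finset.sum_filter_add_sum_filter_not T _ w).symm
  have hcard : T.card = S.card + (T.filter (fun a => ¬ w a ≤ l)).card :=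
    (Finset.card_filter_add_card_filter_not (p := fun a => w a ≤ l)).symm
  have h1 : ∑ a ∈ S, w a ≤ l * S.card := by
    calc ∑ a ∈ S, w a ≤ ∑ _a ∈ S, l := by
          apply Finset.sum_le_sum
          intro a ha
          exact (Finset.mem_filter.mp ha).2
      _ = l * S.card := by rw [Finset.sum_const, smul_eq_mul, mul_comm]
  have h2 : l * (T.filter (fun a => ¬ w a ≤ l)).card ≤ ∑ a ∈ T.filter (fun a => ¬ w a ≤ l), w a := by
    calc l * (T.filter (fun a => ¬ w a ≤ l)).card
        = ∑ _a ∈ T.filter (fun a => ¬ w a ≤ l), l := by rw [Finset.sum_const, smul_eq_mul, mul_comm]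
      _ ≤ _ := by
          apply Finset.sum_le_sum
          intro a ha
          exact le_of_lt (lt_of_not_ge (Finset.mem_filter.mp ha).2)
  rw [hsplit, hcard, Nat.mul_add, Nat.mul_add]
  apply Nat.add_le_add
  · exact le_of_eq (mul_comm _ _)
  calc (∑ a ∈ S, w a) * (T.filter (fun a => ¬ w a ≤ l)).card
      ≤ l * S.card * (T.filter (fun a => ¬ w a ≤ l)).card := by gcongr
    _ = S.card * (l * (T.filter (fun a => ¬ w a ≤ l)).card) := by ring
    _ ≤ S.card * ∑ a ∈ T.filter (fun a => ¬ w a ≤ l), w a := by gcongr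

/-- `𝒦_l · n_k ≤ n_l · 𝒦_k` for sublevel sets of the box `{𝐚 ≼ 𝐤}`. -/
theorem stmt2 (d : ℕ) (hd : 1 ≤ d) (k : Fin d → ℕ) (hk : ∀ i, 0 < k i)
    (l K : ℕ) (hlK : l ≤ K) :
    (∑ a ∈ (Finset.Iic k).filter (fun a => 1 ≤ ∑ i, a i ∧ (∑ i, a i) ≤ l), ∑ i, a i)
        * ((Finset.Iic k).filter (fun a => 1 ≤ ∑ i, a i ∧ (∑ i, a i) ≤ K)).card
      ≤ ((Finset.Iic k).filter (fun a => 1 ≤ ∑ i, a i ∧ (∑ i, a i) ≤ l)).card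
        * (∑ a ∈ (Finset.Iic k).filter (fun a => 1 ≤ ∑ i, a i ∧ (∑ i, a i) ≤ K), ∑ i, a i) := by
  classical
  set T := (Finset.Iic k).filter (fun a => 1 ≤ ∑ i, a i ∧ (∑ i, a i) ≤ K) with hT
  have hfilt : (Finset.Iic k).filter (fun a => 1 ≤ ∑ i, a i ∧ (∑ i, a i) ≤ l)
      = T.filter (fun a => (∑ i, a i) ≤ l) := by
    rw [hT, Finset.filter_filter]
    apply Finset.filter_congr
    intro a _
    constructor
    · rintro ⟨h1, h2⟩; exact ⟨⟨h1, h2.trans hlK⟩, h2⟩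
    · rintro ⟨⟨h1, _⟩, h2⟩; exact ⟨h1, h2⟩
  rw [hfilt]
  exact aux_avg T (fun a => ∑ i, a i) l
end

section
/- Let d ≥ 0 and 𝐤 ∈ ℕ^d. For l ∈ ℤ let Λ^𝐤_l be the number of 𝐚 ∈ ℕ^d with 𝐚 ≼ 𝐤 and |𝐚| = l (so Λ^𝐤_l = 0 for l < 0). Then for all integers a, b, a', b' with a + b = a' + b' and b' ≥ max(a, b), we have Λ^𝐤_a · Λ^𝐤_b ≥ Λ^𝐤_{a'} · Λ^𝐤_{b'}. -/
open Finset

/-- Spreading a pair (with equal sum) decreases the product. -/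
def PropP (f : ℤ → ℕ) : Prop :=
  ∀ a b a' b' : ℤ, a + b = a' + b' → a ≤ b' → b ≤ b' → f a' * f b' ≤ f a * f b

lemma chainP (f : ℤ → ℕ) (h : ∀ a b : ℤ, a ≤ b → f (a-1) * f (b+1) ≤ f a * f b) :
    PropP f := by
  have key : ∀ n : ℕ, ∀ a b : ℤ, a ≤ b → f (a - n) * f (b + n) ≤ f a * f b := by
    intro n
    induction n with
    | zero => simp
    | succ n ih =>
      intro a b hab
      have h1 : f (a - n - 1) * f (b + n + 1) ≤ f (a - n) * f (b + n) :=
        h _ _ (by linarith)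
      have e1 : a - ((n:ℕ)+1:ℕ) = a - (n:ℤ) - 1 := by push_cast; ring
      have e2 : b + ((n:ℕ)+1:ℕ) = b + (n:ℤ) + 1 := by push_cast; ring
      calc f (a - ((n:ℕ)+1:ℕ)) * f (b + ((n:ℕ)+1:ℕ))
          = f (a - n - 1) * f (b + n + 1) := by rw [e1, e2]
        _ ≤ f (a - n) * f (b + n) := h1
        _ ≤ f a * f b := ih a b hab
  intro a b a' b' hsum ha hb
  rcases le_total a b with hab | hab
  · obtain ⟨n, hn⟩ := Int.le.dest hb
    have ha' : a' = a - n := by omega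
    have hb'' : b' = b + n := by omega
    rw [ha', hb'']
    exact key n a b hab
  · obtain ⟨n, hn⟩ := Int.le.dest ha
    have ha' : a' = b - n := by omega
    have hb'' : b' = a + n := by omega
    rw [ha', hb'', mul_comm (f a) (f b)]
    exact key n b a hab

lemma sum_shift (f : ℤ → ℕ) (m : ℕ) (c : ℤ) :
    ∑ j ∈ range (m+1), f (c - j)
      = (∑ j ∈ range m, f (c - 1 - j)) + f c := by
  rw [Finset.sum_range_succ' (fun j => f (c - j)) m]
  congr 1
  · apply Finset.sum_congr rfl
    intro j _
    congr 1
    push_cast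
    ring
  · norm_num

lemma convP (f : ℤ → ℕ) (hf : PropP f) (m : ℕ) :
    PropP (fun l => ∑ j ∈ range (m+1), f (l - j)) := by
  apply chainP
  intro a b hab
  set A : ℕ := ∑ j ∈ range (m+1), f (a - j) with hA
  set A' : ℕ := ∑ j ∈ range (m+1), f (a - 1 - j) with hA'
  set B : ℕ := ∑ j ∈ range (m+1), f (b - j) with hB
  set B' : ℕ := ∑ j ∈ range (m+1), f (b + 1 - j) with hB'
  have I1 : A' * f (b+1) ≤ B * f a := by
    rw [hA', hB, sum_mul, sum_mul]
    apply Finset.sum_le_sum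
    intro j hj
    simp only [mem_range] at hj
    rw [mul_comm (f (b - j)) (f a)]
    exact hf a (b - j) (a-1-j) (b+1) (by ring) (by linarith) (by omega)
  have I2 : B * f (a-1-(m:ℤ)) ≤ A' * f (b-(m:ℤ)) := by
    rw [hA', hB, sum_mul, sum_mul]
    apply Finset.sum_le_sum
    intro j hj
    simp only [mem_range] at hj
    rw [mul_comm (f (b - j)) (f (a-1-(m:ℤ)))]
    exact hf (a-1-j) (b-(m:ℤ)) (a-1-(m:ℤ)) (b-j) (by ring) (by omega) (by omega)
  have II : A + f (a-1-(m:ℤ)) = A' + f a := by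
    have h1 : A = (∑ j ∈ range m, f (a - 1 - j)) + f a := by
      rw [hA]; exact sum_shift f m a
    have h2 : A' = (∑ j ∈ range m, f (a - 1 - j)) + f (a-1-(m:ℤ)) := by
      rw [hA', Finset.sum_range_succ]
    omega
  have III : B' + f (b-(m:ℤ)) = B + f (b+1) := by
    have h1 : B' = (∑ j ∈ range m, f (b - j)) + f (b+1) := by
      rw [hB']
      have := sum_shift f m (b+1)
      simpa using this
    have h2 : B = (∑ j ∈ range m, f (b - j)) + f (b-(m:ℤ)) := by
      rw [hB, Finset.sum_range_succ]
    omega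
  -- conclude in ℤ
  zify at I1 I2 II III ⊢
  nlinarith [I1, I2, II, III]

lemma lam_rec (d : ℕ) (k : Fin (d+1) → ℕ) (l : ℤ) :
    ((Iic k).filter (fun a => (∑ i, (a i : ℤ)) = l)).card
    = ∑ j ∈ range (k (Fin.last d) + 1),
        ((Iic (fun i : Fin d => k i.castSucc)).filter
          (fun a => (∑ i, (a i : ℤ)) = l - (j:ℕ))).card := by
  rw [Finset.card_eq_sum_card_fiberwise (f := fun a => a (Fin.last d))
      (t := range (k (Fin.last d) + 1))
      (fun a ha => by
        simp only [mem_coe, mem_filter, mem_Iic] at ha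
        simp only [mem_coe, mem_range]
        exact Nat.lt_succ_of_le (ha.1 (Fin.last d)))]
  apply Finset.sum_congr rfl
  intro j hj
  simp only [mem_range] at hj
  apply Finset.card_nbij' (i := fun a => Fin.init a) (j := fun b => Fin.snoc b j)
  · intro a ha
    simp only [mem_coe, mem_filter, mem_Iic] at ha ⊢
    obtain ⟨⟨hle, hsum⟩, hlast⟩ := ha
    refine ⟨fun i => hle i.castSucc, ?_⟩
    rw [Fin.sum_univ_castSucc] at hsum
    have : ∀ i : Fin d, (Fin.init a i : ℤ) = (a i.castSucc : ℤ) := fun i => rfl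
    simp only [this]
    rw [hlast] at hsum
    omega
  · intro b hb
    simp only [mem_coe, mem_filter, mem_Iic] at hb ⊢
    obtain ⟨hle, hsum⟩ := hb
    refine ⟨⟨fun i => ?_, ?_⟩, ?_⟩
    · refine Fin.lastCases ?_ ?_ i
      · simp only [Fin.snoc_last]; omega
      · intro i'; simp only [Fin.snoc_castSucc]; exact hle i'
    · rw [Fin.sum_univ_castSucc]
      simp only [Fin.snoc_castSucc, Fin.snoc_last]
      omega
    · exact Fin.snoc_last _ _
  · intro a ha
    simp only [mem_coe, mem_filter] at ha
    rw [← ha.2]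
    exact Fin.snoc_init_self a
  · intro b _
    simp

lemma lamP (d : ℕ) : ∀ k : Fin d → ℕ,
    PropP (fun l => ((Finset.Iic k).filter (fun a => (∑ i, (a i : ℤ)) = l)).card) := by
  induction d with
  | zero =>
    intro k
    have hval : ∀ l : ℤ,
        ((Finset.Iic k).filter (fun a => (∑ i, (a i : ℤ)) = l)).card
          = if l = 0 then 1 else 0 := by
      intro l
      have hIic : (Finset.Iic k) = {k} := by
        ext a
        simp [Subsingleton.elim a k]
      split_ifs with h0
      · rw [Finset.filter_true_of_mem (fun x _ => by simp [h0]), hIic]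
        simp
      · rw [Finset.filter_false_of_mem (fun x _ => by simp; omega)]
        simp
    intro a b a' b' hsum ha hb
    simp only [hval]
    by_cases h : a' = 0 ∧ b' = 0
    · have ha0 : a = 0 := by omega
      have hb0 : b = 0 := by omega
      simp [h.1, h.2, ha0, hb0]
    · rcases not_and_or.mp h with h' | h' <;> simp [h']
  | succ d ih =>
    intro k
    intro a b a' b' hsum ha hb
    have hconv := convP _ (ih (fun i : Fin d => k i.castSucc)) (k (Fin.last d))
    simp only [lam_rec d k]
    exact hconv a b a' b' hsum ha hb

/-- Log-concavity type inequality for the level set counts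
`Λ^𝐤_l = #{𝐚 ≼ 𝐤 : |𝐚| = l}` (with `Λ^𝐤_l = 0` for `l < 0`):
if `a + b = a' + b'` and `b' ≥ max(a,b)` then `Λ_a·Λ_b ≥ Λ_{a'}·Λ_{b'}`. -/
theorem stmt3 (d : ℕ) (k : Fin d → ℕ)
    (Λ : ℤ → ℕ)
    (hΛ : ∀ l : ℤ, Λ l = ((Finset.Iic k).filter (fun a => (∑ i, (a i : ℤ)) = l)).card)
    (a b a' b' : ℤ) (hsum : a + b = a' + b') (hb'a : a ≤ b') (hb'b : b ≤ b') :
    Λ a' * Λ b' ≤ Λ a * Λ b := by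
  simp only [hΛ]
  exact lamP d k a b a' b' hsum hb'a hb'b
end

section
/- Let d ≥ 1, 𝐤 ∈ ℕ_{>0}^d, 1 ≤ l < l', and let B ⊆ ℕ^d be an up-set with respect to the product order. Let 𝒮^𝐤_j = {𝐚 ∈ ℕ^d : 𝐚 ≼ 𝐤, 1 ≤ |𝐚| ≤ j}. Then |𝒮^𝐤_{l'}| · |B ∩ 𝒮^𝐤_l| ≤ |𝒮^𝐤_l| · |B ∩ 𝒮^𝐤_{l'}|. -/
open Finset

namespace NM5

lemma monoRatioAux (r : ℤ → ℕ) (N : ℤ)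
    (hsupp : ∀ m, r m ≠ 0 ↔ 0 ≤ m ∧ m ≤ N)
    (hLC : ∀ m, r m * r (m + 2) ≤ r (m + 1) * r (m + 1)) :
    ∀ (t : ℕ) (x y : ℤ), x ≤ y → (y - x).toNat = t → r x * r (y + 1) ≤ r (x + 1) * r y := by
  intro t
  induction t with
  | zero =>
    intro x y hxy ht
    have : y = x := by omega
    rw [this, mul_comm]
  | succ t ih =>
    intro x y hxy ht
    have hxy' : x ≤ y - 1 := by omega
    have A : r x * r y ≤ r (x + 1) * r (y - 1) := by
      have := ih x (y - 1) hxy' (by omega)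
      simpa using this
    have B : r (y - 1) * r (y + 1) ≤ r y * r y := by
      have := hLC (y - 1)
      have e1 : y - 1 + 2 = y + 1 := by ring
      have e2 : y - 1 + 1 = y := by ring
      rwa [e1, e2] at this
    by_cases hx0 : r x = 0
    · simp [hx0]
    · by_cases hy0 : r y = 0
      · have h1 : ¬ (0 ≤ y ∧ y ≤ N) := fun h => ((hsupp y).mpr h) hy0
        have h3 := (hsupp x).mp hx0
        have hy1 : r (y + 1) = 0 := by
          by_contra h
          have := (hsupp (y + 1)).mp h
          omega
        simp [hy1]
      · have hx' := (hsupp x).mp hx0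
        have hy' := (hsupp y).mp hy0
        have hym : r (y - 1) ≠ 0 := (hsupp (y - 1)).mpr ⟨by omega, by omega⟩
        have key : (r x * r (y + 1)) * (r (y - 1) * r y) ≤ (r (x + 1) * r y) * (r (y - 1) * r y) := by
          calc (r x * r (y + 1)) * (r (y - 1) * r y)
              = (r x * r y) * (r (y - 1) * r (y + 1)) := by ring
            _ ≤ (r (x + 1) * r (y - 1)) * (r y * r y) := Nat.mul_le_mul A B
            _ = (r (x + 1) * r y) * (r (y - 1) * r y) := by ring
        exact Nat.le_of_mul_le_mul_right key
          (Nat.mul_pos (Nat.pos_of_ne_zero hym) (Nat.pos_of_ne_zero hy0))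

lemma monoRatio (r : ℤ → ℕ) (N : ℤ)
    (hsupp : ∀ m, r m ≠ 0 ↔ 0 ≤ m ∧ m ≤ N)
    (hLC : ∀ m, r m * r (m + 2) ≤ r (m + 1) * r (m + 1)) :
    ∀ x y : ℤ, x ≤ y → r x * r (y + 1) ≤ r (x + 1) * r y := fun x y hxy =>
  monoRatioAux r N hsupp hLC (y - x).toNat x y hxy rfl

lemma crossZ (r : ℤ → ℕ) (N : ℤ)
    (hsupp : ∀ m, r m ≠ 0 ↔ 0 ≤ m ∧ m ≤ N)
    (hLC : ∀ m, r m * r (m + 2) ≤ r (m + 1) * r (m + 1)) :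
    ∀ (t : ℕ) (a b a' b' : ℤ), a' ≤ a → a ≤ b → b ≤ b' → a + b = a' + b' →
      (a - a').toNat = t → r a' * r b' ≤ r a * r b := by
  intro t
  induction t with
  | zero =>
    intro a b a' b' h1 h2 h3 h4 h5
    have ha : a = a' := by omega
    have hb : b = b' := by omega
    rw [ha, hb]
  | succ t ih =>
    intro a b a' b' h1 h2 h3 h4 h5
    have ha : a' < a := by omega
    have step : r a' * r b' ≤ r (a' + 1) * r (b' - 1) := by
      have := monoRatio r N hsupp hLC a' (b' - 1) (by omega)
      simpa using this
    exact le_trans step (ih a b (a'+1) (b'-1) (by omega) h2 (by omega) (by omega) (by omega))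

lemma crossPairZ (r : ℤ → ℕ) (N : ℤ)
    (hsupp : ∀ m, r m ≠ 0 ↔ 0 ≤ m ∧ m ≤ N)
    (hLC : ∀ m, r m * r (m + 2) ≤ r (m + 1) * r (m + 1))
    (x y x' y' : ℤ) (h1 : x' ≤ x) (h2 : x' ≤ y) (h3 : x + y = x' + y') :
    r x' * r y' ≤ r x * r y := by
  rcases le_total x y with h | h
  · exact crossZ r N hsupp hLC _ x y x' y' h1 h (by omega) (by omega) rfl
  · rw [mul_comm (r x)]
    exact crossZ r N hsupp hLC _ y x x' y' h2 h (by omega) (by omega) rfl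

lemma windowLC (p : ℤ → ℕ)
    (hpair : ∀ x y x' y' : ℤ, x' ≤ x → x' ≤ y → x + y = x' + y' → p x' * p y' ≤ p x * p y)
    (n : ℕ) (m : ℤ) :
    (∑ i ∈ range (n+1), p (m - i)) * (∑ i ∈ range (n+1), p (m + 2 - i))
      ≤ (∑ i ∈ range (n+1), p (m + 1 - i)) * (∑ i ∈ range (n+1), p (m + 1 - i)) := by
  set X := ∑ i ∈ range n, p (m - i) with hX
  set Y := ∑ i ∈ range n, p (m + 1 - i) with hY
  have e1 : ∑ i ∈ range (n+1), p (m - i) = X + p (m - n) := by rw [sum_range_succ]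
  have e2 : ∑ i ∈ range (n+1), p (m + 1 - i) = X + p (m + 1) := by
    calc ∑ i ∈ range (n+1), p (m + 1 - i)
        = (∑ i ∈ range n, p (m + 1 - ((i+1:ℕ):ℤ))) + p (m + 1 - ((0:ℕ):ℤ)) :=
          sum_range_succ' _ n
      _ = X + p (m + 1) := by
          congr 1
          · apply sum_congr rfl; intro i _; congr 1; push_cast; ring
          · congr 1; push_cast; ring
  have e3 : ∑ i ∈ range (n+1), p (m + 1 - i) = Y + p (m + 1 - n) := by rw [sum_range_succ]
  have e4 : ∑ i ∈ range (n+1), p (m + 2 - i) = Y + p (m + 2) := by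
    calc ∑ i ∈ range (n+1), p (m + 2 - i)
        = (∑ i ∈ range n, p (m + 2 - ((i+1:ℕ):ℤ))) + p (m + 2 - ((0:ℕ):ℤ)) :=
          sum_range_succ' _ n
      _ = Y + p (m + 2) := by
          congr 1
          · apply sum_congr rfl; intro i _; congr 1; push_cast; ring
          · congr 1; push_cast; ring
  have i1 : X * p (m+2) ≤ p (m+1) * Y := by
    rw [sum_mul, mul_sum]
    apply sum_le_sum
    intro i hi
    exact hpair (m+1) (m+1-i) (m-i) (m+2) (by omega) (by omega) (by ring)
  have i2 : p (m-n) * Y ≤ X * p (m+1-n) := by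
    rw [mul_sum, sum_mul]
    apply sum_le_sum
    intro i hi
    rw [mem_range] at hi
    have : (i:ℤ) < n := by exact_mod_cast hi
    exact hpair (m-i) (m+1-n) (m-n) (m+1-i) (by omega) (by omega) (by ring)
  have i3 : p (m-n) * p (m+2) ≤ p (m+1) * p (m+1-n) := by
    exact hpair (m+1) (m+1-n) (m-n) (m+2) (by omega) (by omega) (by ring)
  have e5 : X + p (m + 1) = Y + p (m + 1 - n) := by rw [← e2, e3]
  rw [e1, e4, e2]
  nth_rewrite 2 [e5]
  calc (X + p (m-n)) * (Y + p (m+2))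
      = X*Y + (X*p (m+2) + (p (m-n)*Y + p (m-n)*p (m+2))) := by ring
    _ ≤ X*Y + (p (m+1)*Y + (X*p (m+1-n) + p (m+1)*p (m+1-n))) :=
        Nat.add_le_add_left (Nat.add_le_add i1 (Nat.add_le_add i2 i3)) _
    _ = (X + p (m+1)) * (Y + p (m+1-n)) := by ring


section StarQ

lemma rangeIcc (n : ℕ) : range (n+1) = Icc 0 n := by
  ext i; simp [Nat.lt_succ_iff]

lemma IocIcc (u v : ℕ) : Ioc u v = Icc (u+1) v := by
  ext i; simp only [mem_Ioc, mem_Icc]; omega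

lemma sum_shift_one (f : ℕ → ℚ) (u v : ℕ) :
    ∑ i ∈ Ioc u (v+1), f i = ∑ i ∈ Icc u v, f (i+1) := by
  rw [IocIcc, ← map_add_right_Icc u v 1, sum_map]
  simp

lemma IocDisj (a b c : ℕ) : Disjoint (Ioc a b) (Ioc b c) := by
  rw [disjoint_left]; intro x h1 h2; rw [mem_Ioc] at h1 h2; omega

lemma G0_split (n : ℕ) (ρ : ℕ → ℚ) :
    ∑ i ∈ range (n+1), ρ i = ρ 0 + ∑ i ∈ Ioc 0 n, ρ i := by
  rw [rangeIcc, Icc_eq_cons_Ioc (Nat.zero_le n), sum_cons]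

lemma G1_split (n : ℕ) (ρ : ℕ → ℚ) :
    ∑ i ∈ range (n+1), ρ (i+1) = ∑ i ∈ Ioc 0 (n+1), ρ i := by
  rw [rangeIcc, ← sum_shift_one]

lemma G1_split' (n : ℕ) (ρ : ℕ → ℚ) :
    ∑ i ∈ range (n+1), ρ (i+1) = (∑ i ∈ Ioc 0 n, ρ i) + ρ (n+1) := by
  rw [G1_split, ← Ioc_union_Ioc_eq_Ioc (Nat.zero_le n) (Nat.le_succ n),
    sum_union (IocDisj 0 n (n+1)), Nat.Ioc_succ_singleton, sum_singleton]

lemma keyB (n : ℕ) (ρ : ℕ → ℚ) (hρ : ∀ i, 0 ≤ ρ i)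
    (hpair : ∀ x y x' y' : ℕ, x' ≤ x → x' ≤ y → x + y = x' + y' → ρ x' * ρ y' ≤ ρ x * ρ y)
    (u : ℕ) (hun : u ≤ n) :
    ρ 0 * (∑ i ∈ Ioc u (n+1), ρ i) + ρ (n+1) * (∑ i ∈ Ioc 0 u, ρ i)
      ≤ ρ u * (∑ i ∈ Ioc 0 (n+1), ρ i) := by
  have hsplit : Ioc 0 (n+1) = Ioc 0 (n+1-u) ∪ Ioc (n+1-u) (n+1) :=
    (Ioc_union_Ioc_eq_Ioc (by omega) (by omega)).symm
  rw [hsplit, sum_union (IocDisj 0 (n+1-u) (n+1)), mul_add]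
  apply add_le_add
  · have e : ∑ i ∈ Ioc u (n+1), ρ i = ∑ j ∈ Ioc 0 (n+1-u), ρ (u + j) := by
      apply sum_nbij' (i := fun a => a - u) (j := fun b => u + b)
      · intro a ha; rw [mem_Ioc] at ha ⊢; omega
      · intro b hb; rw [mem_Ioc] at hb ⊢; omega
      · intro a ha; rw [mem_Ioc] at ha; omega
      · intro b hb; rw [mem_Ioc] at hb; omega
      · intro a ha; rw [mem_Ioc] at ha; congr 1; omega
    rw [e, mul_sum, mul_sum]
    apply sum_le_sum
    intro j _
    exact hpair u j 0 (u + j) (Nat.zero_le u) (Nat.zero_le j) (by omega)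
  · have e : ∑ i ∈ Ioc (n+1-u) (n+1), ρ i = ∑ j ∈ Ioc 0 u, ρ ((n+1-u) + j) := by
      apply sum_nbij' (i := fun a => a - (n+1-u)) (j := fun b => (n+1-u) + b)
      · intro a ha; rw [mem_Ioc] at ha ⊢; omega
      · intro b hb; rw [mem_Ioc] at hb ⊢; omega
      · intro a ha; rw [mem_Ioc] at ha; omega
      · intro b hb; rw [mem_Ioc] at hb; omega
      · intro a ha; rw [mem_Ioc] at ha; congr 1; omega
    rw [e, mul_sum, mul_sum]
    apply sum_le_sum
    intro j hj
    rw [mem_Ioc] at hj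
    have := hpair u ((n+1-u) + j) j (n+1) hj.2 (by omega) (by omega)
    calc ρ (n+1) * ρ j = ρ j * ρ (n+1) := mul_comm _ _
      _ ≤ _ := this

lemma runIneq (n : ℕ) (ρ : ℕ → ℚ) (hρ : ∀ i, 0 ≤ ρ i)
    (hpair : ∀ x y x' y' : ℕ, x' ≤ x → x' ≤ y → x + y = x' + y' → ρ x' * ρ y' ≤ ρ x * ρ y)
    (u v : ℕ) (huv : u ≤ v) (hvn : v ≤ n) :
    (∑ i ∈ Icc u v, ρ (i+1)) * (∑ i ∈ range (n+1), ρ i)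
      ≤ (∑ i ∈ Icc u (min (v+1) n), ρ i) * (∑ i ∈ range (n+1), ρ (i+1)) := by
  set G0 := ∑ i ∈ range (n+1), ρ i with hG0def
  set G1 := ∑ i ∈ range (n+1), ρ (i+1) with hG1def
  set W := ∑ i ∈ Ioc 0 n, ρ i with hWdef
  have hG0 : G0 = ρ 0 + W := G0_split n ρ
  have hG1 : G1 = W + ρ (n+1) := G1_split' n ρ
  have hG1' : G1 = ∑ i ∈ Ioc 0 (n+1), ρ i := G1_split n ρ
  rcases lt_or_eq_of_le hvn with hlt | heq
  · have hmin : min (v+1) n = v+1 := min_eq_left (by omega)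
    rw [hmin]
    have e1 : ∑ i ∈ Icc u (v+1), ρ i = ρ u + ∑ i ∈ Icc u v, ρ (i+1) := by
      rw [← sum_shift_one, Icc_eq_cons_Ioc (by omega : u ≤ v+1), sum_cons]
    set S' := ∑ i ∈ Icc u v, ρ (i+1) with hS'
    have hS'nn : 0 ≤ S' := sum_nonneg fun i _ => hρ _
    have key : S' * ρ 0 ≤ ρ u * G1 := by
      have t1 : ∀ i ∈ Icc u v, ρ (i+1) * ρ 0 ≤ ρ u * ρ (i+1-u) := by
        intro i hi; rw [mem_Icc] at hi
        have := hpair u (i+1-u) 0 (i+1) (Nat.zero_le u) (Nat.zero_le _) (by omega)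
        calc ρ (i+1) * ρ 0 = ρ 0 * ρ (i+1) := mul_comm _ _
          _ ≤ _ := this
      have t2 : ∑ i ∈ Icc u v, ρ (i+1-u) ≤ G1 := by
        have e : ∑ i ∈ Icc u v, ρ (i+1-u) = ∑ j ∈ Icc 0 (v-u), ρ (j+1) := by
          apply sum_nbij' (i := fun a => a - u) (j := fun b => b + u)
          · intro a ha; rw [mem_Icc] at ha ⊢; omega
          · intro b hb; rw [mem_Icc] at hb ⊢; omega
          · intro a ha; rw [mem_Icc] at ha; omega
          · intro b hb; rw [mem_Icc] at hb; omega
          · intro a ha; rw [mem_Icc] at ha; congr 1; omega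
        rw [e, hG1def, rangeIcc]
        apply sum_le_sum_of_subset_of_nonneg
        · intro x hx; rw [mem_Icc] at hx ⊢; omega
        · intro i _ _; exact hρ _
      calc S' * ρ 0 = ∑ i ∈ Icc u v, ρ (i+1) * ρ 0 := by rw [hS', sum_mul]
        _ ≤ ∑ i ∈ Icc u v, ρ u * ρ (i+1-u) := sum_le_sum t1
        _ = ρ u * ∑ i ∈ Icc u v, ρ (i+1-u) := by rw [mul_sum]
        _ ≤ ρ u * G1 := mul_le_mul_of_nonneg_left t2 (hρ u)
    rw [e1]
    calc S' * G0 = S' * ρ 0 + S' * W := by rw [hG0]; ring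
      _ ≤ ρ u * G1 + S' * G1 :=
          add_le_add key (mul_le_mul_of_nonneg_left
            (by rw [hG1]; exact le_add_of_nonneg_right (hρ _)) hS'nn)
      _ = (ρ u + S') * G1 := by ring
  · subst heq
    have hmin : min (v+1) v = v := min_eq_right (by omega)
    rw [hmin]
    have e2 : ∑ i ∈ Icc u v, ρ i = ρ u + ∑ i ∈ Ioc u v, ρ i := by
      rw [Icc_eq_cons_Ioc (by omega : u ≤ v), sum_cons]
    have e3 : ∑ i ∈ Icc u v, ρ (i+1) = ∑ i ∈ Ioc u (v+1), ρ i := (sum_shift_one ρ u v).symm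
    have e4 : ∑ i ∈ Ioc u (v+1), ρ i = (∑ i ∈ Ioc u v, ρ i) + ρ (v+1) := by
      rw [← Ioc_union_Ioc_eq_Ioc (by omega : u ≤ v) (Nat.le_succ v),
        sum_union (IocDisj u v (v+1)), Nat.Ioc_succ_singleton, sum_singleton]
    set M := ∑ i ∈ Ioc u v, ρ i with hM
    set U := ∑ i ∈ Ioc 0 u, ρ i with hU
    have hW : W = U + M := by
      rw [hWdef, hU, hM, ← Ioc_union_Ioc_eq_Ioc (Nat.zero_le u) (by omega : u ≤ v),
        sum_union (IocDisj 0 u v)]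
    have hkey := keyB v ρ hρ hpair u huv
    rw [e4, ← hG1'] at hkey
    rw [e2, e3, e4]
    calc (M + ρ (v+1)) * G0
        = (ρ 0 * (M + ρ (v+1)) + ρ (v+1) * U) + (M * W + ρ (v+1) * M) := by
          rw [hG0, hW]; ring
      _ ≤ ρ u * G1 + (M * W + ρ (v+1) * M) := add_le_add hkey le_rfl
      _ = (ρ u + M) * G1 := by rw [hG1, hW]; ring

lemma starInd (n : ℕ) (ρ : ℕ → ℚ) (hρ : ∀ i, 0 ≤ ρ i)
    (hpair : ∀ x y x' y' : ℕ, x' ≤ x → x' ≤ y → x + y = x' + y' → ρ x' * ρ y' ≤ ρ x * ρ y) :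
    ∀ S : Finset ℕ, (∀ s ∈ S, s ≤ n) →
      (∑ i ∈ S, ρ (i+1)) * (∑ i ∈ range (n+1), ρ i)
        ≤ (∑ i ∈ (S ∪ S.image (· + 1)).filter (· ≤ n), ρ i) * (∑ i ∈ range (n+1), ρ (i+1)) := by
  intro S
  induction S using Finset.strongInduction with
  | _ S ih =>
    intro hS
    rcases S.eq_empty_or_nonempty with rfl | hne
    · simp
    · set u := S.min' hne with hu
      have huS : u ∈ S := S.min'_mem hne
      have humin : ∀ s ∈ S, u ≤ s := fun s hs => S.min'_le s hs
      have hex : ∃ t, u + t + 1 ∉ S := ⟨S.max' hne, fun hmem => by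
        have := S.le_max' _ hmem; omega⟩
      have hv1 : u + Nat.find hex + 1 ∉ S := Nat.find_spec hex
      set v := u + Nat.find hex with hvdef
      have hrun : ∀ x, u ≤ x → x ≤ v → x ∈ S := by
        intro x h1 h2
        rcases Nat.eq_or_lt_of_le h1 with rfl | hlt
        · exact huS
        · have hx : x - u - 1 < Nat.find hex := by omega
          have h3 := Nat.find_min hex hx
          rw [not_not] at h3
          have e : u + (x - u - 1) + 1 = x := by omega
          rwa [e] at h3
      have hvS : v ∈ S := hrun v (by omega) le_rfl
      have hvn : v ≤ n := hS v hvS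
      have huv : u ≤ v := by omega
      have hv1' : v + 1 ∉ S := hv1
      set S₂ := S.filter (fun s => v + 2 ≤ s) with hS₂
      have hSsplit : Icc u v ∪ S₂ = S := by
        ext s
        simp only [mem_union, mem_Icc, hS₂, mem_filter]
        constructor
        · rintro (⟨h1, h2⟩ | ⟨h, _⟩)
          · exact hrun s h1 h2
          · exact h
        · intro hs
          have h1 := humin s hs
          by_cases h2 : s ≤ v
          · exact Or.inl ⟨h1, h2⟩
          · refine Or.inr ⟨hs, ?_⟩
            have hne' : s ≠ v + 1 := fun h => hv1' (h ▸ hs)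
            omega
      have hdisj : Disjoint (Icc u v) S₂ := by
        rw [disjoint_left]; intro a ha hb
        rw [mem_Icc] at ha; rw [hS₂, mem_filter] at hb; omega
      have hS₂sub : S₂ ⊂ S := by
        refine (Finset.ssubset_iff_of_subset (filter_subset _ _)).mpr ⟨u, huS, ?_⟩
        rw [mem_filter]; push_neg; intro _; omega
      have hTsplit : (S ∪ S.image (· + 1)).filter (· ≤ n)
          = Icc u (min (v+1) n) ∪ (S₂ ∪ S₂.image (· + 1)).filter (· ≤ n) := by
        ext i
        simp only [mem_filter, mem_union, mem_image, mem_Icc, hS₂, mem_filter]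
        constructor
        · rintro ⟨hiS | ⟨j, hjS, rfl⟩, hin⟩
          · by_cases hle : i ≤ v
            · exact Or.inl ⟨humin i hiS, le_min (by omega) hin⟩
            · have hne' : i ≠ v + 1 := fun h => hv1' (h ▸ hiS)
              exact Or.inr ⟨Or.inl ⟨hiS, by omega⟩, hin⟩
          · by_cases hle : j ≤ v
            · have := humin j hjS
              exact Or.inl ⟨by omega, le_min (by omega) hin⟩
            · have hne' : j ≠ v + 1 := fun h => hv1' (h ▸ hjS)
              exact Or.inr ⟨Or.inr ⟨j, ⟨hjS, by omega⟩, rfl⟩, hin⟩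
        · rintro (⟨h1, h2⟩ | ⟨⟨h, _⟩ | ⟨j, ⟨hjS, _⟩, rfl⟩, hin⟩)
          · rw [le_min_iff] at h2
            by_cases hle : i ≤ v
            · exact ⟨Or.inl (hrun i h1 hle), h2.2⟩
            · have hiv : i = v + 1 := by omega
              exact ⟨Or.inr ⟨v, hvS, by omega⟩, h2.2⟩
          · exact ⟨Or.inl h, hin⟩
          · exact ⟨Or.inr ⟨j, hjS, rfl⟩, hin⟩
      have hTdisj : Disjoint (Icc u (min (v+1) n)) ((S₂ ∪ S₂.image (· + 1)).filter (· ≤ n)) := by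
        rw [disjoint_left]; intro a ha hb
        rw [mem_Icc, le_min_iff] at ha
        simp only [mem_filter, mem_union, mem_image, hS₂, mem_filter] at hb
        rcases hb.1 with ⟨_, h⟩ | ⟨j, ⟨_, hj⟩, rfl⟩
        · omega
        · omega
      have eS : ∑ i ∈ S, ρ (i+1) = (∑ i ∈ Icc u v, ρ (i+1)) + ∑ i ∈ S₂, ρ (i+1) := by
        rw [← hSsplit, sum_union hdisj]
      have eT : ∑ i ∈ (S ∪ S.image (· + 1)).filter (· ≤ n), ρ i
          = (∑ i ∈ Icc u (min (v+1) n), ρ i)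
            + ∑ i ∈ (S₂ ∪ S₂.image (· + 1)).filter (· ≤ n), ρ i := by
        rw [hTsplit, sum_union hTdisj]
      rw [eS, eT, add_mul, add_mul]
      have hrec := ih S₂ hS₂sub (fun s hs => hS s (filter_subset _ _ hs))
      exact add_le_add (runIneq n ρ hρ hpair u v huv hvn) hrec

lemma star (n : ℕ) (ρ : ℕ → ℚ) (hρ : ∀ i, 0 ≤ ρ i)
    (hpair : ∀ x y x' y' : ℕ, x' ≤ x → x' ≤ y → x + y = x' + y' → ρ x' * ρ y' ≤ ρ x * ρ y)
    (A : ℕ → ℚ) (hA0 : A 0 = 0) (hA1 : ∀ i, 0 ≤ A i) (hA2 : ∀ i, A i ≤ 1) :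
    (∑ i ∈ range (n+1), A (i+1) * ρ (i+1)) * (∑ i ∈ range (n+1), ρ i)
      ≤ (∑ i ∈ range (n+1), max (A i) (A (i+1)) * ρ i) * (∑ i ∈ range (n+1), ρ (i+1)) := by
  suffices H : ∀ (C : ℕ) (A : ℕ → ℚ), A 0 = 0 → (∀ i, 0 ≤ A i) → (∀ i, A i ≤ 1) →
      ((range (n+2)).filter (fun i => 0 < A i)).card ≤ C →
      (∑ i ∈ range (n+1), A (i+1) * ρ (i+1)) * (∑ i ∈ range (n+1), ρ i)
        ≤ (∑ i ∈ range (n+1), max (A i) (A (i+1)) * ρ i) * (∑ i ∈ range (n+1), ρ (i+1)) by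
    exact H _ A hA0 hA1 hA2 le_rfl
  intro C
  induction C with
  | zero =>
    intro A hA0 hA1 hA2 hcard
    have hcard0 : ((range (n+2)).filter (fun i => 0 < A i)) = ∅ :=
      card_eq_zero.mp (Nat.le_zero.mp hcard)
    have hzero : ∀ i, i < n + 2 → ¬ (0 < A i) := by
      intro i hi hpos
      have hmem : i ∈ (range (n+2)).filter (fun i => 0 < A i) :=
        mem_filter.mpr ⟨mem_range.mpr hi, hpos⟩
      rw [hcard0] at hmem
      exact absurd hmem (notMem_empty i)
    have hL : ∑ i ∈ range (n+1), A (i+1) * ρ (i+1) = 0 := by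
      apply sum_eq_zero; intro i hi
      rw [mem_range] at hi
      have h0 : A (i+1) = 0 := le_antisymm (not_lt.mp (hzero (i+1) (by omega))) (hA1 _)
      rw [h0, zero_mul]
    rw [hL, zero_mul]
    apply mul_nonneg (sum_nonneg ?_) (sum_nonneg fun i _ => hρ _)
    intro i _
    exact mul_nonneg (le_trans (hA1 i) (le_max_left _ _)) (hρ _)
  | succ C ihC =>
    intro A hA0 hA1 hA2 hcard
    by_cases hne : ((range (n+2)).filter (fun i => 0 < A i)).Nonempty
    case neg =>
      have hzero : ∀ i, i < n + 2 → ¬ (0 < A i) := by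
        intro i hi hpos
        exact hne ⟨i, mem_filter.mpr ⟨mem_range.mpr hi, hpos⟩⟩
      have hL : ∑ i ∈ range (n+1), A (i+1) * ρ (i+1) = 0 := by
        apply sum_eq_zero; intro i hi
        rw [mem_range] at hi
        have h0 : A (i+1) = 0 := le_antisymm (not_lt.mp (hzero (i+1) (by omega))) (hA1 _)
        rw [h0, zero_mul]
      rw [hL, zero_mul]
      apply mul_nonneg (sum_nonneg ?_) (sum_nonneg fun i _ => hρ _)
      intro i _
      exact mul_nonneg (le_trans (hA1 i) (le_max_left _ _)) (hρ _)
    case pos =>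
      set F := (range (n+2)).filter (fun i => 0 < A i) with hF
      set τ := (F.image A).min' (hne.image A) with hτdef
      obtain ⟨i₀, hi₀F, hi₀⟩ := mem_image.mp (min'_mem (F.image A) (hne.image A))
      have hτeq : τ = A i₀ := by rw [hτdef, hi₀]
      have hτpos : 0 < τ := by rw [hτeq]; exact (mem_filter.mp hi₀F).2
      have hτle : ∀ i, i < n + 2 → 0 < A i → τ ≤ A i := by
        intro i h1 h2
        exact min'_le _ _ (mem_image_of_mem A (mem_filter.mpr ⟨mem_range.mpr h1, h2⟩))
      set A' := fun i => if 0 < A i ∧ i ≤ n + 1 then A i - τ else A i with hA'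
      have hA'0 : A' 0 = 0 := by
        rw [hA']; dsimp only
        rw [if_neg (fun h => absurd hA0 (ne_of_gt h.1))]
        exact hA0
      have hA'1 : ∀ i, 0 ≤ A' i := by
        intro i; rw [hA']; dsimp only; split
        · rename_i h; have := hτle i (by omega) h.1; linarith
        · exact hA1 i
      have hA'2 : ∀ i, A' i ≤ 1 := by
        intro i; rw [hA']; dsimp only; split
        · have := hA2 i; linarith
        · exact hA2 i
      have hA'eq : ∀ i, ¬ (0 < A i) → A' i = A i := by
        intro i h; rw [hA']; dsimp only; rw [if_neg (fun hh => h hh.1)]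
      have hsub : (range (n+2)).filter (fun i => 0 < A' i) ⊂ F := by
        refine (Finset.ssubset_iff_of_subset ?_).mpr ⟨i₀, hi₀F, ?_⟩
        · intro i hi
          rw [mem_filter] at hi
          rw [hF, mem_filter]
          refine ⟨hi.1, ?_⟩
          by_contra hpos
          rw [hA'eq i hpos] at hi
          exact hpos hi.2
        · rw [mem_filter]; push_neg; intro hmem
          have hi₀n : i₀ ≤ n + 1 := by
            have := (mem_filter.mp hi₀F).1; rw [mem_range] at this; omega
          have hA'i₀ : A' i₀ = A i₀ - τ := by
            rw [hA']; dsimp only; rw [if_pos ⟨(mem_filter.mp hi₀F).2, hi₀n⟩]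
          rw [hA'i₀, hi₀]; simp; exact le_of_eq hτdef.symm
      have hcard' : ((range (n+2)).filter (fun i => 0 < A' i)).card ≤ C := by
        have h1 := card_lt_card hsub
        omega
      set S := (range (n+1)).filter (fun i => 0 < A (i+1)) with hS
      have hSsub : ∀ s ∈ S, s ≤ n := by
        intro s hs; rw [hS, mem_filter, mem_range] at hs; omega
      set T := (S ∪ S.image (· + 1)).filter (· ≤ n) with hT
      have hTmem : ∀ i, i ∈ T ↔ i ≤ n ∧ (0 < A i ∨ 0 < A (i+1)) := by
        intro i
        rw [hT]
        simp only [mem_filter, mem_union, mem_image, hS, mem_filter, mem_range]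
        constructor
        · rintro ⟨⟨hi, h⟩ | ⟨j, ⟨hj, h⟩, rfl⟩, hin⟩
          · exact ⟨hin, Or.inr h⟩
          · exact ⟨hin, Or.inl h⟩
        · rintro ⟨hin, h | h⟩
          · have hi1 : i ≠ 0 := by
              rintro rfl; rw [hA0] at h; exact lt_irrefl 0 h
            refine ⟨Or.inr ⟨i - 1, ⟨by omega, ?_⟩, by omega⟩, hin⟩
            have e : i - 1 + 1 = i := by omega
            rw [e]; exact h
          · exact ⟨Or.inl ⟨by omega, h⟩, hin⟩
      have id1 : ∀ i ∈ range (n+1),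
          A (i+1) * ρ (i+1) = A' (i+1) * ρ (i+1) + (if i ∈ S then τ * ρ (i+1) else 0) := by
        intro i hi; rw [mem_range] at hi
        by_cases h : 0 < A (i+1)
        · have hiS : i ∈ S := by rw [hS, mem_filter, mem_range]; exact ⟨hi, h⟩
          have hA'e : A' (i+1) = A (i+1) - τ := by
            rw [hA']; dsimp only; rw [if_pos ⟨h, by omega⟩]
          rw [if_pos hiS, hA'e]; ring
        · have hiS : i ∉ S := by rw [hS, mem_filter]; rintro ⟨_, hh⟩; exact h hh
          rw [if_neg hiS, hA'eq _ h, add_zero]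
      have id2 : ∀ i ∈ range (n+1),
          max (A i) (A (i+1)) * ρ i
            = max (A' i) (A' (i+1)) * ρ i + (if i ∈ T then τ * ρ i else 0) := by
        intro i hi; rw [mem_range] at hi
        have hin : i ≤ n := by omega
        by_cases h1 : 0 < A i <;> by_cases h2 : 0 < A (i+1)
        · have hiT : i ∈ T := (hTmem i).mpr ⟨hin, Or.inl h1⟩
          have e1 : A' i = A i - τ := by
            rw [hA']; dsimp only; rw [if_pos ⟨h1, by omega⟩]
          have e2 : A' (i+1) = A (i+1) - τ := by
            rw [hA']; dsimp only; rw [if_pos ⟨h2, by omega⟩]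
          rw [if_pos hiT, e1, e2, max_sub_sub_right]; ring
        · have hiT : i ∈ T := (hTmem i).mpr ⟨hin, Or.inl h1⟩
          have h20 : A (i+1) = 0 := le_antisymm (not_lt.mp h2) (hA1 _)
          have e1 : A' i = A i - τ := by
            rw [hA']; dsimp only; rw [if_pos ⟨h1, by omega⟩]
          have e2 : A' (i+1) = A (i+1) := hA'eq _ h2
          have hτA : τ ≤ A i := hτle i (by omega) h1
          rw [if_pos hiT, e1, e2, h20, max_eq_left (le_of_lt h1),
            max_eq_left (by linarith : (0:ℚ) ≤ A i - τ)]
          ring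
        · have hiT : i ∈ T := (hTmem i).mpr ⟨hin, Or.inr h2⟩
          have h10 : A i = 0 := le_antisymm (not_lt.mp h1) (hA1 _)
          have e1 : A' i = A i := hA'eq _ h1
          have e2 : A' (i+1) = A (i+1) - τ := by
            rw [hA']; dsimp only; rw [if_pos ⟨h2, by omega⟩]
          have hτA : τ ≤ A (i+1) := hτle (i+1) (by omega) h2
          rw [if_pos hiT, e1, e2, h10, max_eq_right (le_of_lt h2),
            max_eq_right (by linarith : (0:ℚ) ≤ A (i+1) - τ)]
          ring
        · have hiT : i ∉ T := by
            intro h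
            rcases ((hTmem i).mp h).2 with hh | hh
            exacts [h1 hh, h2 hh]
          rw [if_neg hiT, hA'eq _ h1, hA'eq _ h2, add_zero]
      have hSrange : S ⊆ range (n+1) := by rw [hS]; exact filter_subset _ _
      have sum1 : ∑ i ∈ range (n+1), A (i+1) * ρ (i+1)
          = (∑ i ∈ range (n+1), A' (i+1) * ρ (i+1)) + τ * ∑ i ∈ S, ρ (i+1) := by
        rw [sum_congr rfl id1, sum_add_distrib]
        congr 1
        rw [sum_ite_mem, (inter_eq_right).mpr hSrange, mul_sum]
      have hTrange : T ⊆ range (n+1) := by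
        intro i hi
        rw [mem_range]
        have := ((hTmem i).mp hi).1
        omega
      have sum2 : ∑ i ∈ range (n+1), max (A i) (A (i+1)) * ρ i
          = (∑ i ∈ range (n+1), max (A' i) (A' (i+1)) * ρ i) + τ * ∑ i ∈ T, ρ i := by
        rw [sum_congr rfl id2, sum_add_distrib]
        congr 1
        rw [sum_ite_mem, (inter_eq_right).mpr hTrange, mul_sum]
      have hstarInd := starInd n ρ hρ hpair S hSsub
      rw [← hT] at hstarInd
      have hIH := ihC A' hA'0 hA'1 hA'2 hcard'
      calc (∑ i ∈ range (n+1), A (i+1) * ρ (i+1)) * (∑ i ∈ range (n+1), ρ i)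
          = (∑ i ∈ range (n+1), A' (i+1) * ρ (i+1)) * (∑ i ∈ range (n+1), ρ i)
              + τ * ((∑ i ∈ S, ρ (i+1)) * (∑ i ∈ range (n+1), ρ i)) := by rw [sum1]; ring
        _ ≤ (∑ i ∈ range (n+1), max (A' i) (A' (i+1)) * ρ i) * (∑ i ∈ range (n+1), ρ (i+1))
              + τ * ((∑ i ∈ T, ρ i) * (∑ i ∈ range (n+1), ρ (i+1))) :=
            add_le_add hIH (mul_le_mul_of_nonneg_left hstarInd (le_of_lt hτpos))
        _ = (∑ i ∈ range (n+1), max (A i) (A (i+1)) * ρ i) * (∑ i ∈ range (n+1), ρ (i+1)) := by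
            rw [sum2]; ring

end StarQ


section Box

def lev {d : ℕ} (k : Fin d → ℕ) (m : ℤ) : Finset (Fin d → ℕ) :=
  (Finset.Iic k).filter fun a => (∑ i, (a i : ℤ)) = m

def vZ {d : ℕ} (k : Fin d → ℕ) (m : ℤ) : ℕ := (lev k m).card

noncomputable def bZ {d : ℕ} (k : Fin d → ℕ) (Q : (Fin d → ℕ) → Prop) (m : ℤ) : ℕ :=
  (@Finset.filter _ Q (Classical.decPred Q) (lev k m)).card

lemma bZ_le_vZ {d : ℕ} (k : Fin d → ℕ) (Q : (Fin d → ℕ) → Prop) (m : ℤ) :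
    bZ k Q m ≤ vZ k m :=
  card_le_card (@Finset.filter_subset _ Q (Classical.decPred Q) (lev k m))

lemma bZ_mono {d : ℕ} (k : Fin d → ℕ) {Q R : (Fin d → ℕ) → Prop}
    (h : ∀ x, Q x → R x) (m : ℤ) : bZ k Q m ≤ bZ k R m := by
  unfold bZ
  letI : DecidablePred Q := Classical.decPred Q
  letI : DecidablePred R := Classical.decPred R
  apply card_le_card
  intro x hx
  have h1 := Finset.mem_filter.mp hx
  exact Finset.mem_filter.mpr ⟨h1.1, h x h1.2⟩

lemma sumSnoc {d : ℕ} (x : Fin d → ℕ) (j : ℕ) :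
    (∑ i, ((Fin.snoc x j : Fin (d+1) → ℕ) i : ℤ)) = (∑ i, (x i : ℤ)) + j := by
  rw [Fin.sum_univ_castSucc]
  simp

lemma snocLe {d : ℕ} {x y : Fin d → ℕ} {a b : ℕ} (h1 : x ≤ y) (h2 : a ≤ b) :
    (Fin.snoc x a : Fin (d+1) → ℕ) ≤ Fin.snoc y b := by
  intro i
  refine Fin.lastCases ?_ ?_ i
  · simpa using h2
  · intro j
    simpa using h1 j

lemma cardSlice {d : ℕ} (k' : Fin d → ℕ) (kn : ℕ) (P : (Fin (d+1) → ℕ) → Prop)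
    [DecidablePred P] :
    ((Finset.Iic (Fin.snoc k' kn : Fin (d+1) → ℕ)).filter P).card
      = ∑ j ∈ range (kn+1), ((Finset.Iic k').filter fun x => P (Fin.snoc x j)).card := by
  have hmem : ∀ a ∈ (Finset.Iic (Fin.snoc k' kn : Fin (d+1) → ℕ)).filter P,
      a (Fin.last d) ∈ range (kn+1) := by
    intro a ha
    rw [mem_filter, Finset.mem_Iic] at ha
    rw [mem_range]
    have := ha.1 (Fin.last d)
    simp only [Fin.snoc_last] at this
    omega
  rw [Finset.card_eq_sum_card_fiberwise hmem]
  · refine sum_congr rfl fun j hj => ?_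
    rw [mem_range] at hj
    apply Finset.card_nbij' (i := fun a => Fin.init a) (j := fun x => Fin.snoc x j)
    · intro a ha
      rw [mem_coe, mem_filter, mem_filter, Finset.mem_Iic] at ha
      rw [mem_coe, mem_filter, Finset.mem_Iic]
      obtain ⟨⟨hle, hP⟩, hlast⟩ := ha
      constructor
      · intro i
        have := hle (Fin.castSucc i)
        simpa [Fin.init] using this
      · have : (Fin.snoc (Fin.init a) (a (Fin.last d)) : Fin (d+1) → ℕ) = a :=
          Fin.snoc_init_self a
        rw [hlast] at this
        rw [this]
        exact hP
    · intro x hx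
      rw [mem_coe, mem_filter, Finset.mem_Iic] at hx
      rw [mem_coe, mem_filter, mem_filter, Finset.mem_Iic]
      refine ⟨⟨snocLe hx.1 (by omega), hx.2⟩, ?_⟩
      simp
    · intro a ha
      rw [mem_coe, mem_filter, mem_filter] at ha
      rw [← ha.2]
      exact Fin.snoc_init_self a
    · intro x hx
      simp

lemma vZ_slice {d : ℕ} (k' : Fin d → ℕ) (kn : ℕ) (m : ℤ) :
    vZ (Fin.snoc k' kn) m = ∑ j ∈ range (kn+1), vZ k' (m - j) := by
  classical
  unfold vZ lev
  rw [cardSlice]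
  refine sum_congr rfl fun j hj => ?_
  congr 1
  apply filter_congr
  intro x _
  rw [sumSnoc]
  constructor <;> intro h <;> omega

open Classical in
lemma bZ_slice {d : ℕ} (k' : Fin d → ℕ) (kn : ℕ) (Q : (Fin (d+1) → ℕ) → Prop) (m : ℤ) :
    bZ (Fin.snoc k' kn) Q m
      = ∑ j ∈ range (kn+1), bZ k' (fun x => Q (Fin.snoc x j)) (m - j) := by
  unfold bZ lev
  rw [filter_filter, cardSlice]
  refine sum_congr rfl fun j hj => ?_
  rw [filter_filter]
  congr 1
  apply filter_congr
  intro x _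
  rw [sumSnoc]
  constructor
  · rintro ⟨h1, h2⟩; exact ⟨by omega, h2⟩
  · rintro ⟨h1, h2⟩; exact ⟨by omega, h2⟩

lemma vZ_pos : ∀ {d : ℕ} (k : Fin d → ℕ) (m : ℤ),
    vZ k m ≠ 0 ↔ 0 ≤ m ∧ m ≤ ∑ i, (k i : ℤ) := by
  intro d
  induction d with
  | zero =>
    intro k m
    unfold vZ lev
    rw [Ne, card_eq_zero, ← not_nonempty_iff_eq_empty, not_not, filter_nonempty_iff]
    constructor
    · rintro ⟨a, _, h⟩
      have h0 : m = 0 := by simpa using h.symm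
      have hk0 : (∑ i, (k i : ℤ)) = 0 := by simp
      rw [h0, hk0]
      exact ⟨le_rfl, le_rfl⟩
    · rintro ⟨h1, h2⟩
      have hk0 : (∑ i, (k i : ℤ)) = 0 := by simp
      rw [hk0] at h2
      have hm : m = 0 := le_antisymm h2 h1
      exact ⟨k, Finset.mem_Iic.mpr le_rfl, by rw [hm]; simp⟩
  | succ d IH =>
    intro k m
    have hk : (Fin.snoc (Fin.init k) (k (Fin.last d)) : Fin (d+1) → ℕ) = k :=
      Fin.snoc_init_self k
    rw [← hk, vZ_slice]
    have hsum : ∑ i, ((Fin.snoc (Fin.init k) (k (Fin.last d)) : Fin (d+1) → ℕ) i : ℤ)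
        = (∑ i, (Fin.init k i : ℤ)) + (k (Fin.last d)) := sumSnoc _ _
    rw [hsum]
    set N' := ∑ i, (Fin.init k i : ℤ) with hN'
    have hN'nn : 0 ≤ N' := sum_nonneg fun i _ => Int.natCast_nonneg _
    set kn := k (Fin.last d) with hkn
    constructor
    · intro h
      have hex : ∃ j ∈ range (kn+1), vZ (Fin.init k) (m - j) ≠ 0 := by
        by_contra hc
        push_neg at hc
        exact h (sum_eq_zero hc)
      obtain ⟨j, hj, hne⟩ := hex
      rw [mem_range] at hj
      obtain ⟨h1, h2⟩ := (IH (Fin.init k) (m - j)).mp hne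
      exact ⟨by omega, by omega⟩
    · rintro ⟨h1, h2⟩
      by_cases hm : m ≤ N'
      · intro hzero
        have h0 : vZ (Fin.init k) (m - (0:ℕ)) = 0 := by
          have := Finset.sum_eq_zero_iff.mp hzero
          exact this 0 (mem_range.mpr (by omega))
        have : vZ (Fin.init k) m ≠ 0 := (IH (Fin.init k) m).mpr ⟨h1, hm⟩
        simp only [Nat.cast_zero, sub_zero] at h0
        exact this h0
      · set j := (m - N').toNat with hj
        have hjeq : (j : ℤ) = m - N' := Int.toNat_of_nonneg (by omega)
        intro hzero
        have h0 : vZ (Fin.init k) (m - j) = 0 :=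
          Finset.sum_eq_zero_iff.mp hzero j (mem_range.mpr (by omega))
        have hmj : m - (j:ℤ) = N' := by omega
        rw [hmj] at h0
        exact ((IH (Fin.init k) N').mpr ⟨hN'nn, le_refl N'⟩) h0

lemma vZ_LC : ∀ {d : ℕ} (k : Fin d → ℕ) (m : ℤ),
    vZ k m * vZ k (m + 2) ≤ vZ k (m + 1) * vZ k (m + 1) := by
  intro d
  induction d with
  | zero =>
    intro k m
    rcases eq_or_ne m 0 with rfl | hm
    · have h2 : vZ k ((0:ℤ)+2) = 0 := by
        by_contra h
        have h3 := (vZ_pos k _).mp h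
        have hk0 : (∑ i, (k i : ℤ)) = 0 := by simp
        rw [hk0] at h3
        omega
      rw [h2, mul_zero]
      exact Nat.zero_le _
    · have h1 : vZ k m = 0 := by
        by_contra h
        have h3 := (vZ_pos k m).mp h
        have hk0 : (∑ i, (k i : ℤ)) = 0 := by simp
        rw [hk0] at h3
        omega
      rw [h1, zero_mul]
      exact Nat.zero_le _
  | succ d IH =>
    intro k m
    have hk : (Fin.snoc (Fin.init k) (k (Fin.last d)) : Fin (d+1) → ℕ) = k :=
      Fin.snoc_init_self k
    rw [← hk, vZ_slice, vZ_slice, vZ_slice]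
    have hpair : ∀ x y x' y' : ℤ, x' ≤ x → x' ≤ y → x + y = x' + y' →
        vZ (Fin.init k) x' * vZ (Fin.init k) y' ≤ vZ (Fin.init k) x * vZ (Fin.init k) y :=
      fun x y x' y' h1 h2 h3 =>
        crossPairZ (vZ (Fin.init k)) _ (vZ_pos (Fin.init k)) (IH (Fin.init k)) x y x' y' h1 h2 h3
    exact windowLC (vZ (Fin.init k)) hpair (k (Fin.last d)) m


lemma NMlevel : ∀ {d : ℕ} (k : Fin d → ℕ) (Q : (Fin d → ℕ) → Prop),
    (∀ x y, Q x → x ≤ y → Q y) → ∀ h : ℤ,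
    vZ k (h+1) * bZ k Q h ≤ vZ k h * bZ k Q (h+1) := by
  intro d
  induction d with
  | zero =>
    intro k Q _ h
    rcases eq_or_ne h 0 with rfl | hm
    · have h2 : vZ k ((0:ℤ)+1) = 0 := by
        by_contra hc
        have h3 := (vZ_pos k _).mp hc
        have hk0 : (∑ i, (k i : ℤ)) = 0 := by simp
        rw [hk0] at h3; omega
      rw [h2, zero_mul]
      exact Nat.zero_le _
    · have h1 : vZ k h = 0 := by
        by_contra hc
        have h3 := (vZ_pos k h).mp hc
        have hk0 : (∑ i, (k i : ℤ)) = 0 := by simp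
        rw [hk0] at h3; omega
      have h2 : bZ k Q h = 0 := by have := bZ_le_vZ k Q h; omega
      rw [h2, mul_zero]
      exact Nat.zero_le _
  | succ d IH =>
    intro k Q hQ h
    set k' := Fin.init k with hk'
    set kn := k (Fin.last d) with hkn
    have hk : (Fin.snoc k' kn : Fin (d+1) → ℕ) = k := Fin.snoc_init_self k
    rw [← hk]
    set c : ℕ → ℤ → ℕ := fun i m => bZ k' (fun x => Q (Fin.snoc x i)) m with hcdef
    have hcapp : ∀ (i : ℕ) (m : ℤ), c i m = bZ k' (fun x => Q (Fin.snoc x i)) m :=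
      fun _ _ => rfl
    have hcv : ∀ (i : ℕ) (m : ℤ), c i m ≤ vZ k' m := fun i m => bZ_le_vZ _ _ _
    have hmono : ∀ (i : ℕ) (m : ℤ), c i m ≤ c (i+1) m := by
      intro i m
      exact bZ_mono k' (fun x hx => hQ _ _ hx (snocLe le_rfl (Nat.le_succ i))) m
    have hrow : ∀ (i : ℕ) (m : ℤ), vZ k' (m+1) * c i m ≤ vZ k' m * c i (m+1) :=
      fun i m => IH k' _ (fun x y hx hxy => hQ _ _ hx (snocLe hxy le_rfl)) m
    set ρ : ℕ → ℚ := fun i => (vZ k' (h + 1 - (i:ℤ)) : ℚ) with hρdef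
    have hρapp : ∀ i : ℕ, ρ i = (vZ k' (h + 1 - (i:ℤ)) : ℚ) := fun i => rfl
    have hρ0 : ∀ i, 0 ≤ ρ i := fun i => Nat.cast_nonneg _
    have hpair : ∀ x y x' y' : ℕ, x' ≤ x → x' ≤ y → x + y = x' + y' →
        ρ x' * ρ y' ≤ ρ x * ρ y := by
      intro x y x' y' h1 h2 h3
      have hcross := crossPairZ (vZ k') _ (vZ_pos k') (vZ_LC k')
        (h+1-(x:ℤ)) (h+1-(y:ℤ)) (h+1-(y':ℤ)) (h+1-(x':ℤ)) (by omega) (by omega) (by omega)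
      have hcross' : vZ k' (h+1-(x':ℤ)) * vZ k' (h+1-(y':ℤ))
          ≤ vZ k' (h+1-(x:ℤ)) * vZ k' (h+1-(y:ℤ)) := by
        calc vZ k' (h+1-(x':ℤ)) * vZ k' (h+1-(y':ℤ))
            = vZ k' (h+1-(y':ℤ)) * vZ k' (h+1-(x':ℤ)) := Nat.mul_comm _ _
          _ ≤ _ := hcross
      rw [hρapp, hρapp, hρapp, hρapp]
      exact_mod_cast hcross'
    set A : ℕ → ℚ := fun j => if j = 0 then 0 else (c (j-1) (h+1-(j:ℤ)) : ℚ) / ρ j with hAdef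
    have hAapp : ∀ j : ℕ, A j = if j = 0 then 0
        else (c (j-1) (h+1-(j:ℤ)) : ℚ) / ρ j := fun j => rfl
    have hA0 : A 0 = 0 := by rw [hAapp]; simp
    have hA1 : ∀ j, 0 ≤ A j := by
      intro j; rw [hAapp]; split
      · exact le_rfl
      · exact div_nonneg (Nat.cast_nonneg _) (hρ0 j)
    have hA2 : ∀ j, A j ≤ 1 := by
      intro j; rw [hAapp]; split
      · exact zero_le_one
      · apply div_le_one_of_le₀
        · rw [hρapp]
          exact_mod_cast hcv (j-1) (h+1-(j:ℤ))
        · exact hρ0 j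
    have E1 : ∑ i ∈ range (kn+1), ρ i = (vZ (Fin.snoc k' kn) (h+1) : ℚ) := by
      rw [vZ_slice]
      push_cast
      refine sum_congr rfl fun i _ => ?_
      rw [hρapp]
    have E2 : ∑ i ∈ range (kn+1), ρ (i+1) = (vZ (Fin.snoc k' kn) h : ℚ) := by
      rw [vZ_slice]
      push_cast
      refine sum_congr rfl fun i _ => ?_
      rw [hρapp]
      congr 2
      push_cast
      ring
    have E3 : ∑ i ∈ range (kn+1), A (i+1) * ρ (i+1) = (bZ (Fin.snoc k' kn) Q h : ℚ) := by
      rw [bZ_slice]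
      push_cast
      refine sum_congr rfl fun i _ => ?_
      rw [← hcapp i (h - (i:ℤ))]
      have harg : h + 1 - ((i+1:ℕ):ℤ) = h - (i:ℤ) := by push_cast; ring
      have hAe : A (i+1) = (c i (h - (i:ℤ)) : ℚ) / (vZ k' (h - (i:ℤ)) : ℚ) := by
        rw [hAapp, if_neg (Nat.succ_ne_zero i), hρapp, Nat.add_sub_cancel, harg]
      have hρe : ρ (i+1) = (vZ k' (h - (i:ℤ)) : ℚ) := by rw [hρapp, harg]
      rw [hAe, hρe]
      by_cases hz : vZ k' (h - (i:ℤ)) = 0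
      · have hc0 : c i (h - (i:ℤ)) = 0 := Nat.le_zero.mp (hz ▸ hcv i (h - (i:ℤ)))
        rw [hz, hc0]
        simp
      · rw [div_mul_cancel₀ _ (by exact_mod_cast hz : ((vZ k' (h - (i:ℤ)) : ℚ)) ≠ 0)]
    have E4 : ∑ i ∈ range (kn+1), max (A i) (A (i+1)) * ρ i
        ≤ (bZ (Fin.snoc k' kn) Q (h+1) : ℚ) := by
      rw [bZ_slice]
      push_cast
      apply sum_le_sum
      intro i hi
      rw [← hcapp i (h + 1 - (i:ℤ))]
      have hρe : ρ i = (vZ k' (h + 1 - (i:ℤ)) : ℚ) := hρapp i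
      have hb1 : A i * ρ i ≤ (c i (h + 1 - (i:ℤ)) : ℚ) := by
        rcases Nat.eq_zero_or_pos i with rfl | hipos
        · rw [hA0, zero_mul]
          exact Nat.cast_nonneg _
        · obtain ⟨i', rfl⟩ : ∃ i', i = i' + 1 := ⟨i - 1, by omega⟩
          have hAe : A (i'+1) = (c i' (h + 1 - ((i'+1:ℕ):ℤ)) : ℚ) / ρ (i'+1) := by
            rw [hAapp, if_neg (Nat.succ_ne_zero i'), Nat.add_sub_cancel]
          rw [hAe]
          by_cases hz : ρ (i'+1) = 0
          · rw [hz, mul_zero]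
            exact Nat.cast_nonneg _
          · rw [div_mul_cancel₀ _ hz]
            exact_mod_cast hmono i' (h + 1 - ((i'+1:ℕ):ℤ))
      have hb2 : A (i+1) * ρ i ≤ (c i (h + 1 - (i:ℤ)) : ℚ) := by
        have harg : h + 1 - ((i+1:ℕ):ℤ) = h - (i:ℤ) := by push_cast; ring
        have hAe : A (i+1) = (c i (h - (i:ℤ)) : ℚ) / (vZ k' (h - (i:ℤ)) : ℚ) := by
          rw [hAapp, if_neg (Nat.succ_ne_zero i), hρapp, Nat.add_sub_cancel, harg]
        rw [hAe, hρe]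
        by_cases hz : vZ k' (h - (i:ℤ)) = 0
        · have hc0 : c i (h - (i:ℤ)) = 0 := Nat.le_zero.mp (hz ▸ hcv i (h - (i:ℤ)))
          rw [hc0]
          simp
        · rw [div_mul_eq_mul_div, div_le_iff₀ (by exact_mod_cast Nat.pos_of_ne_zero hz :
            (0:ℚ) < (vZ k' (h - (i:ℤ)) : ℚ))]
          have hN : c i (h-(i:ℤ)) * vZ k' (h+1-(i:ℤ))
              ≤ c i (h+1-(i:ℤ)) * vZ k' (h-(i:ℤ)) := by
            have h0 := hrow i (h-(i:ℤ))
            have harg2 : h - (i:ℤ) + 1 = h + 1 - (i:ℤ) := by ring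
            rw [harg2] at h0
            calc c i (h-(i:ℤ)) * vZ k' (h+1-(i:ℤ))
                = vZ k' (h+1-(i:ℤ)) * c i (h-(i:ℤ)) := Nat.mul_comm _ _
              _ ≤ vZ k' (h-(i:ℤ)) * c i (h+1-(i:ℤ)) := h0
              _ = c i (h+1-(i:ℤ)) * vZ k' (h-(i:ℤ)) := Nat.mul_comm _ _
          exact_mod_cast hN
      calc max (A i) (A (i+1)) * ρ i = max (A i * ρ i) (A (i+1) * ρ i) :=
          max_mul_of_nonneg _ _ (hρ0 i)
        _ ≤ _ := max_le hb1 hb2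
    have hstar := star kn ρ hρ0 hpair A hA0 hA1 hA2
    rw [E3, E1, E2] at hstar
    have hfinal : (bZ (Fin.snoc k' kn) Q h : ℚ) * (vZ (Fin.snoc k' kn) (h+1) : ℚ)
        ≤ (bZ (Fin.snoc k' kn) Q (h+1) : ℚ) * (vZ (Fin.snoc k' kn) h : ℚ) :=
      le_trans hstar (mul_le_mul_of_nonneg_right E4 (Nat.cast_nonneg _))
    have hfinalN : bZ (Fin.snoc k' kn) Q h * vZ (Fin.snoc k' kn) (h+1)
        ≤ bZ (Fin.snoc k' kn) Q (h+1) * vZ (Fin.snoc k' kn) h := by exact_mod_cast hfinal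
    calc vZ (Fin.snoc k' kn) (h+1) * bZ (Fin.snoc k' kn) Q h
        = bZ (Fin.snoc k' kn) Q h * vZ (Fin.snoc k' kn) (h+1) := Nat.mul_comm _ _
      _ ≤ bZ (Fin.snoc k' kn) Q (h+1) * vZ (Fin.snoc k' kn) h := hfinalN
      _ = vZ (Fin.snoc k' kn) h * bZ (Fin.snoc k' kn) Q (h+1) := Nat.mul_comm _ _



lemma cross_iter_aux {d : ℕ} (k : Fin d → ℕ) (Q : (Fin d → ℕ) → Prop)
    (hQ : ∀ x y, Q x → x ≤ y → Q y) :
    ∀ (t : ℕ) (m m' : ℤ), m ≤ m' → (m' - m).toNat = t →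
      vZ k m' * bZ k Q m ≤ vZ k m * bZ k Q m' := by
  intro t
  induction t with
  | zero =>
    intro m m' h1 h2
    have : m' = m := by omega
    rw [this]
  | succ t ih =>
    intro m m' h1 h2
    have hm : m ≤ m' - 1 := by omega
    have ihm := ih m (m' - 1) hm (by omega)
    have hnm := NMlevel k Q hQ (m' - 1)
    rw [sub_add_cancel] at hnm
    by_cases hv : vZ k (m' - 1) = 0
    · have hsupp := vZ_pos k (m' - 1)
      have hnot : ¬ (0 ≤ m' - 1 ∧ m' - 1 ≤ ∑ i, (k i : ℤ)) := fun hh => (hsupp.mpr hh) hv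
      by_cases hneg : m' - 1 < 0
      · have hvm : vZ k m = 0 := by
          by_contra hc
          have := (vZ_pos k m).mp hc
          omega
        have hbm : bZ k Q m = 0 := by have := bZ_le_vZ k Q m; omega
        rw [hbm, mul_zero]
        exact Nat.zero_le _
      · have hvm' : vZ k m' = 0 := by
          by_contra hc
          have := (vZ_pos k m').mp hc
          omega
        rw [hvm', zero_mul]
        exact Nat.zero_le _
    · have key : (vZ k m' * bZ k Q m) * vZ k (m' - 1)
          ≤ (vZ k m * bZ k Q m') * vZ k (m' - 1) := by
        calc (vZ k m' * bZ k Q m) * vZ k (m' - 1)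
            = (vZ k (m' - 1) * bZ k Q m) * vZ k m' := by ring
          _ ≤ (vZ k m * bZ k Q (m' - 1)) * vZ k m' := Nat.mul_le_mul ihm le_rfl
          _ = (vZ k m' * bZ k Q (m' - 1)) * vZ k m := by ring
          _ ≤ (vZ k (m' - 1) * bZ k Q m') * vZ k m := Nat.mul_le_mul hnm le_rfl
          _ = (vZ k m * bZ k Q m') * vZ k (m' - 1) := by ring
      exact Nat.le_of_mul_le_mul_right key (Nat.pos_of_ne_zero hv)

lemma cross_iter {d : ℕ} (k : Fin d → ℕ) (Q : (Fin d → ℕ) → Prop)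
    (hQ : ∀ x y, Q x → x ≤ y → Q y) (m m' : ℤ) (hmm' : m ≤ m') :
    vZ k m' * bZ k Q m ≤ vZ k m * bZ k Q m' :=
  cross_iter_aux k Q hQ (m' - m).toNat m m' hmm' rfl

lemma IccIocZ (x : ℤ) : Icc (1:ℤ) x = Ioc 0 x := by
  ext m
  rw [mem_Icc, mem_Ioc]
  omega

lemma sublevel {d : ℕ} (k : Fin d → ℕ) (Q : (Fin d → ℕ) → Prop)
    (hQ : ∀ x y, Q x → x ≤ y → Q y) (l l' : ℤ) (h0 : 0 ≤ l) (hll : l ≤ l') :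
    (∑ m ∈ Icc (1:ℤ) l', vZ k m) * (∑ m ∈ Icc (1:ℤ) l, bZ k Q m)
      ≤ (∑ m ∈ Icc (1:ℤ) l, vZ k m) * (∑ m ∈ Icc (1:ℤ) l', bZ k Q m) := by
  have hdisjZ : Disjoint (Ioc (0:ℤ) l) (Ioc l l') := by
    rw [disjoint_left]; intro a ha hb; rw [mem_Ioc] at ha hb; omega
  have hsplit : ∀ f : ℤ → ℕ, ∑ m ∈ Icc (1:ℤ) l', f m
      = (∑ m ∈ Icc (1:ℤ) l, f m) + ∑ m ∈ Ioc l l', f m := by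
    intro f
    rw [IccIocZ, IccIocZ, ← Ioc_union_Ioc_eq_Ioc h0 hll, sum_union hdisjZ]
  rw [hsplit (vZ k), hsplit (bZ k Q)]
  have key : (∑ m' ∈ Ioc l l', vZ k m') * (∑ m ∈ Icc (1:ℤ) l, bZ k Q m)
      ≤ (∑ m ∈ Icc (1:ℤ) l, vZ k m) * (∑ m' ∈ Ioc l l', bZ k Q m') := by
    rw [sum_mul_sum, sum_mul_sum]
    rw [Finset.sum_comm]
    apply sum_le_sum
    intro m hm
    apply sum_le_sum
    intro m' hm'
    rw [mem_Icc] at hm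
    rw [mem_Ioc] at hm'
    exact cross_iter k Q hQ m m' (by omega)
  calc ((∑ m ∈ Icc (1:ℤ) l, vZ k m) + ∑ m ∈ Ioc l l', vZ k m)
        * (∑ m ∈ Icc (1:ℤ) l, bZ k Q m)
      = (∑ m ∈ Icc (1:ℤ) l, vZ k m) * (∑ m ∈ Icc (1:ℤ) l, bZ k Q m)
        + (∑ m ∈ Ioc l l', vZ k m) * (∑ m ∈ Icc (1:ℤ) l, bZ k Q m) := by ring
    _ ≤ (∑ m ∈ Icc (1:ℤ) l, vZ k m) * (∑ m ∈ Icc (1:ℤ) l, bZ k Q m)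
        + (∑ m ∈ Icc (1:ℤ) l, vZ k m) * (∑ m' ∈ Ioc l l', bZ k Q m') :=
        Nat.add_le_add_left key _
    _ = (∑ m ∈ Icc (1:ℤ) l, vZ k m)
        * ((∑ m ∈ Icc (1:ℤ) l, bZ k Q m) + ∑ m ∈ Ioc l l', bZ k Q m) := by ring

lemma card_sublevel_v {d : ℕ} (k : Fin d → ℕ) (l : ℕ) :
    ((Finset.Iic k).filter (fun a => 1 ≤ ∑ i, a i ∧ (∑ i, a i) ≤ l)).card
      = ∑ m ∈ Icc (1:ℤ) (l:ℤ), vZ k m := by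
  have hmem : ∀ a ∈ (Finset.Iic k).filter (fun a => 1 ≤ ∑ i, a i ∧ (∑ i, a i) ≤ l),
      (∑ i, (a i : ℤ)) ∈ Icc (1:ℤ) (l:ℤ) := by
    intro a ha
    rw [mem_filter] at ha
    rw [mem_Icc]
    have hc : (∑ i, (a i : ℤ)) = ((∑ i, a i : ℕ) : ℤ) := by push_cast; rfl
    obtain ⟨h1, h2⟩ := ha.2
    omega
  rw [Finset.card_eq_sum_card_fiberwise hmem]
  refine sum_congr rfl fun m hm => ?_
  rw [mem_Icc] at hm
  unfold vZ lev
  rw [filter_filter]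
  congr 1
  apply filter_congr
  intro x _
  have hc : (∑ i, (x i : ℤ)) = ((∑ i, x i : ℕ) : ℤ) := by push_cast; rfl
  constructor
  · rintro ⟨_, h⟩; exact h
  · intro h
    refine ⟨⟨?_, ?_⟩, h⟩ <;> omega

lemma card_sublevel_b {d : ℕ} (k : Fin d → ℕ) (l : ℕ) (B : Set (Fin d → ℕ))
    [DecidablePred (· ∈ B)] :
    (((Finset.Iic k).filter (fun a => 1 ≤ ∑ i, a i ∧ (∑ i, a i) ≤ l)).filter
        (fun a => a ∈ B)).card
      = ∑ m ∈ Icc (1:ℤ) (l:ℤ), bZ k (fun a => a ∈ B) m := by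
  rw [filter_filter]
  have hmem : ∀ a ∈ (Finset.Iic k).filter
      (fun a => (1 ≤ ∑ i, a i ∧ (∑ i, a i) ≤ l) ∧ a ∈ B),
      (∑ i, (a i : ℤ)) ∈ Icc (1:ℤ) (l:ℤ) := by
    intro a ha
    rw [mem_filter] at ha
    rw [mem_Icc]
    have hc : (∑ i, (a i : ℤ)) = ((∑ i, a i : ℕ) : ℤ) := by push_cast; rfl
    obtain ⟨⟨h1, h2⟩, _⟩ := ha.2
    omega
  rw [Finset.card_eq_sum_card_fiberwise hmem]
  refine sum_congr rfl fun m hm => ?_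
  rw [mem_Icc] at hm
  unfold bZ lev
  rw [filter_filter, filter_filter]
  congr 1
  ext x
  simp only [mem_filter]
  have hc : (∑ i, (x i : ℤ)) = ((∑ i, x i : ℕ) : ℤ) := by push_cast; rfl
  constructor
  · rintro ⟨hx, ⟨_, hBx⟩, h⟩; exact ⟨hx, h, hBx⟩
  · rintro ⟨hx, h, hBx⟩
    exact ⟨hx, ⟨⟨by omega, by omega⟩, hBx⟩, h⟩


end Box

end NM5


/-- Up-set density increases along sublevel sets:
for an up-set `B ⊆ ℕ^d` and `1 ≤ l < l'`,
`|𝒮^𝐤_{l'}| · |B ∩ 𝒮^𝐤_l| ≤ |𝒮^𝐤_l| · |B ∩ 𝒮^𝐤_{l'}|`. -/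
theorem stmt5 (d : ℕ) (hd : 1 ≤ d) (k : Fin d → ℕ) (hk : ∀ i, 0 < k i)
    (l l' : ℕ) (hl : 1 ≤ l) (hll' : l < l')
    (B : Set (Fin d → ℕ)) [DecidablePred (· ∈ B)]
    (hB : ∀ b c, b ∈ B → b ≤ c → c ∈ B) :
    ((Finset.Iic k).filter (fun a => 1 ≤ ∑ i, a i ∧ (∑ i, a i) ≤ l')).card
        * (((Finset.Iic k).filter (fun a => 1 ≤ ∑ i, a i ∧ (∑ i, a i) ≤ l)).filter
            (fun a => a ∈ B)).card
      ≤ ((Finset.Iic k).filter (fun a => 1 ≤ ∑ i, a i ∧ (∑ i, a i) ≤ l)).card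
        * (((Finset.Iic k).filter (fun a => 1 ≤ ∑ i, a i ∧ (∑ i, a i) ≤ l')).filter
            (fun a => a ∈ B)).card := by
  have key := NM5.sublevel k (fun a => a ∈ B) (fun x y hx hxy => hB x y hx hxy)
    (l : ℤ) (l' : ℤ) (by exact_mod_cast Nat.zero_le l) (by exact_mod_cast hll'.le)
  rw [NM5.card_sublevel_v k l', NM5.card_sublevel_v k l,
    NM5.card_sublevel_b k l B, NM5.card_sublevel_b k l' B]
  exact key
end

section
/- Let d ≥ 1 and let 𝒟 ⊂ ℕ^d be a finite down-set with respect to the product order ≼. Let A ⊆ 𝒟 and B ⊆ ℕ^d, and suppose for every 𝐛 = (b₁,…,b_d) ∈ B there exist inductively defined sets R_{l; n_{l+1},…,n_d; 𝐛} ⊂ ℕ satisfying: (1) whenever n_d ∉ R_{d;𝐛}, n_{d−1} ∉ R_{d−1;n_d;𝐛}, …, n_{l+1} ∉ R_{l+1;n_{l+2},…,n_d;𝐛}, the set R_{l;n_{l+1},…,n_d;𝐛} has at most b_l elements; and (2) for every 𝐚 = (a₁,…,a_d) ∈ A, if a_d ∉ R_{d;𝐛}, a_{d−1} ∉ R_{d−1;a_d;𝐛},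 …, a₂ ∉ R_{2;a₃,…,a_d;𝐛}, then a₁ ∈ R_{1;a₂,…,a_d;𝐛}. Then |A| ≤ |𝒟 \ ↑B|, where ↑B is the up-set generated by B. -/
open Finset
open scoped Classical

private lemma downset_nat_range (s : Finset ℕ)
    (h : ∀ ⦃t t' : ℕ⦄, t' ≤ t → t ∈ s → t' ∈ s) : s = Finset.range s.card := by
  have key : ∀ t, t ∈ s ↔ t < s.card := by
    intro t
    constructor
    · intro ht
      have hsub : Finset.range (t + 1) ⊆ s := fun u hu =>
        h (Nat.lt_succ_iff.mp (Finset.mem_range.mp hu)) ht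
      have := Finset.card_le_card hsub
      simpa using this
    · intro ht
      by_contra hts
      have hsub : s ⊆ Finset.range t := by
        intro u hu
        rw [Finset.mem_range]
        by_contra hut
        exact hts (h (Nat.le_of_not_lt hut) hu)
      have := Finset.card_le_card hsub
      simp only [Finset.card_range] at this
      omega
  ext t
  simp [key]

private lemma le_snoc_iff {d : ℕ} (b : Fin (d+1) → ℕ) (x : Fin d → ℕ) (u : ℕ) :
    b ≤ Fin.snoc x u ↔ Fin.init b ≤ x ∧ b (Fin.last d) ≤ u := by
  constructor
  · intro h
    refine ⟨fun k => ?_, ?_⟩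
    · have := h k.castSucc
      simpa [Fin.init, Fin.snoc_castSucc] using this
    · have := h (Fin.last d)
      simpa [Fin.snoc_last] using this
  · rintro ⟨h1, h2⟩ j
    rcases Fin.eq_castSucc_or_eq_last j with ⟨k, rfl⟩ | rfl
    · simpa [Fin.snoc_castSucc, Fin.init] using h1 k
    · simpa [Fin.snoc_last] using h2

private lemma sz_aux : ∀ (d : ℕ)
    (D : Finset (Fin d → ℕ)),
    (∀ p q : Fin d → ℕ, q ∈ D → p ≤ q → p ∈ D) →
    ∀ (A : Finset (Fin d → ℕ)), A ⊆ D →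
    ∀ (B : Set (Fin d → ℕ))
      (R : (Fin d → ℕ) → Fin d → (Fin d → ℕ) → Finset ℕ),
    (∀ b ∈ B, ∀ (i : Fin d) (n n' : Fin d → ℕ),
      (∀ j, i < j → n j = n' j) → R b i n = R b i n') →
    (∀ b ∈ B, ∀ (i : Fin d) (n : Fin d → ℕ),
      (∀ j, i < j → n j ∉ R b j n) → (R b i n).card ≤ b i) →
    (∀ b ∈ B, ∀ a ∈ A, ∃ j : Fin d, a j ∈ R b j a ∧ ∀ k, j < k → a k ∉ R b k a) →
    A.card ≤ (D.filter (fun p : Fin d → ℕ => ¬ ∃ b ∈ B, b ≤ p)).card := by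
  intro d
  induction d with
  | zero =>
    intro D hD A hA B R hdep h1 h2
    by_cases hB : ∃ b, b ∈ B
    · obtain ⟨b, hb⟩ := hB
      have hAe : A = ∅ := by
        rw [Finset.eq_empty_iff_forall_notMem]
        intro a ha
        obtain ⟨j, _⟩ := h2 b hb a ha
        exact j.elim0
      simp [hAe]
    · apply Finset.card_le_card
      intro p hp
      simp only [Finset.mem_filter]
      exact ⟨hA hp, fun ⟨b, hb, _⟩ => hB ⟨b, hb⟩⟩
  | succ d IH =>
    intro D hD A hA B R hdep h1 h2
    have Sconst : ∀ b ∈ B, ∀ n, R b (Fin.last d) n = R b (Fin.last d) b := fun b hb n =>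
      hdep b hb (Fin.last d) n b (fun j hj => absurd hj (not_lt.mpr (Fin.le_last j)))
    have Scard : ∀ b ∈ B, (R b (Fin.last d) b).card ≤ b (Fin.last d) := fun b hb =>
      h1 b hb (Fin.last d) b (fun j hj _ => absurd hj (not_lt.mpr (Fin.le_last j)))
    set E : Finset (Fin (d+1) → ℕ) :=
      D.filter (fun p => ∀ b ∈ B, Fin.init b ≤ Fin.init p →
        p (Fin.last d) ∈ R b (Fin.last d) b) with hE
    have hED : E ⊆ D := Finset.filter_subset _ _
    have stepA : A.card ≤ E.card := by
      rw [Finset.card_eq_sum_card_fiberwise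
        (f := fun p => p (Fin.last d)) (t := D.image (fun p => p (Fin.last d)))
        (fun p hp => Finset.mem_image_of_mem _ (hA hp))]
      rw [Finset.card_eq_sum_card_fiberwise
        (f := fun p => p (Fin.last d)) (t := D.image (fun p => p (Fin.last d)))
        (fun p hp => Finset.mem_image_of_mem _ (hED hp))]
      apply Finset.sum_le_sum
      intro t _
      have injslice : ∀ (s : Finset (Fin (d+1) → ℕ)),
          (∀ p ∈ s, p (Fin.last d) = t) → (s.image Fin.init).card = s.card := by
        intro s hs
        apply Finset.card_image_of_injOn
        intro p hp q hq hpq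
        have hsn : Fin.snoc (Fin.init p) (p (Fin.last d))
            = Fin.snoc (Fin.init q) (q (Fin.last d)) := by
          rw [hpq, hs p hp, hs q hq]
        rwa [Fin.snoc_init_self, Fin.snoc_init_self] at hsn
      set At := (A.filter (fun p => p (Fin.last d) = t)).image Fin.init with hAtdef
      set Dt := (D.filter (fun p => p (Fin.last d) = t)).image Fin.init with hDtdef
      have hDt : ∀ p q : Fin d → ℕ, q ∈ Dt → p ≤ q → p ∈ Dt := by
        intro p q hq hpq
        rw [hDtdef, Finset.mem_image] at hq ⊢
        obtain ⟨q', hq', rfl⟩ := hq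
        rw [Finset.mem_filter] at hq'
        refine ⟨Fin.snoc p t, Finset.mem_filter.mpr ⟨hD _ q' hq'.1 ?_, by simp⟩, by simp⟩
        intro j
        rcases Fin.eq_castSucc_or_eq_last j with ⟨k, rfl⟩ | rfl
        · simpa [Fin.snoc_castSucc, Fin.init] using hpq k
        · simp [Fin.snoc_last, hq'.2]
      have hAD : At ⊆ Dt := Finset.image_subset_image (Finset.filter_subset_filter _ hA)
      set Bt : Set (Fin d → ℕ) :=
        {x | ∃ b, b ∈ B ∧ Fin.init b = x ∧ t ∉ R b (Fin.last d) b} with hBtdef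
      set R' : (Fin d → ℕ) → Fin d → (Fin d → ℕ) → Finset ℕ :=
        fun x i n => if hx : ∃ b, b ∈ B ∧ Fin.init b = x ∧ t ∉ R b (Fin.last d) b
          then R hx.choose i.castSucc (Fin.snoc n t) else ∅ with hR'def
      have hdep' : ∀ x ∈ Bt, ∀ (i : Fin d) (n n' : Fin d → ℕ),
          (∀ j, i < j → n j = n' j) → R' x i n = R' x i n' := by
        intro x hx i n n' hnn
        have hx' : ∃ b, b ∈ B ∧ Fin.init b = x ∧ t ∉ R b (Fin.last d) b := hx
        simp only [hR'def, dif_pos hx']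
        apply hdep _ hx'.choose_spec.1
        intro j hj
        rcases Fin.eq_castSucc_or_eq_last j with ⟨k, rfl⟩ | rfl
        · have hik : i < k := Fin.castSucc_lt_castSucc_iff.mp hj
          simp [Fin.snoc_castSucc, hnn k hik]
        · simp [Fin.snoc_last]
      have h1' : ∀ x ∈ Bt, ∀ (i : Fin d) (n : Fin d → ℕ),
          (∀ j, i < j → n j ∉ R' x j n) → (R' x i n).card ≤ x i := by
        intro x hx i n hprem
        have hx' : ∃ b, b ∈ B ∧ Fin.init b = x ∧ t ∉ R b (Fin.last d) b := hx
        obtain ⟨hbB, hbx, hbt⟩ := hx'.choose_spec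
        simp only [hR'def, dif_pos hx'] at hprem ⊢
        have hcard := h1 _ hbB i.castSucc (Fin.snoc n t) ?_
        · calc (R hx'.choose i.castSucc (Fin.snoc n t)).card
              ≤ hx'.choose i.castSucc := hcard
            _ = x i := congrFun hbx i
        · intro j hj
          rcases Fin.eq_castSucc_or_eq_last j with ⟨k, rfl⟩ | rfl
          · have hik : i < k := Fin.castSucc_lt_castSucc_iff.mp hj
            have := hprem k hik
            rw [Fin.snoc_castSucc]
            exact this
          · rw [Fin.snoc_last, Sconst _ hbB]
            exact hbt
      have h2'' : ∀ x ∈ Bt, ∀ a ∈ At,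
          ∃ j : Fin d, a j ∈ R' x j a ∧ ∀ k, j < k → a k ∉ R' x k a := by
        intro x hx a' ha'
        have hx' : ∃ b, b ∈ B ∧ Fin.init b = x ∧ t ∉ R b (Fin.last d) b := hx
        obtain ⟨hbB, hbx, hbt⟩ := hx'.choose_spec
        rw [hAtdef, Finset.mem_image] at ha'
        obtain ⟨p, hp, rfl⟩ := ha'
        rw [Finset.mem_filter] at hp
        obtain ⟨hpA, hpt⟩ := hp
        have hsnoc : Fin.snoc (Fin.init p) t = p := by
          rw [← hpt]; exact Fin.snoc_init_self p
        obtain ⟨j, hj1, hj2⟩ := h2 _ hbB p hpA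
        rcases Fin.eq_castSucc_or_eq_last j with ⟨k, rfl⟩ | rfl
        · refine ⟨k, ?_, ?_⟩
          · simp only [hR'def, dif_pos hx', hsnoc]
            exact hj1
          · intro k' hkk'
            simp only [hR'def, dif_pos hx', hsnoc]
            exact hj2 k'.castSucc (Fin.castSucc_lt_castSucc_iff.mpr hkk')
        · exfalso
          rw [hpt, Sconst _ hbB] at hj1
          exact hbt hj1
      have hIH := IH Dt hDt At hAD Bt R' hdep' h1' h2''
      have e1 : (A.filter (fun p => p (Fin.last d) = t)).card = At.card :=
        (injslice _ (fun p hp => (Finset.mem_filter.mp hp).2)).symm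
      have e2 : (E.filter (fun p => p (Fin.last d) = t)).card
          = (Dt.filter (fun x => ¬ ∃ x' ∈ Bt, x' ≤ x)).card := by
        rw [hDtdef, Finset.filter_image,
          injslice _ (fun p hp => (Finset.mem_filter.mp (Finset.mem_filter.mp hp).1).2)]
        congr 1
        ext p
        simp only [hE, Finset.mem_filter]
        constructor
        · rintro ⟨⟨hpD, hps⟩, hpt⟩
          refine ⟨⟨hpD, hpt⟩, ?_⟩
          rintro ⟨x', ⟨b, hbB, hbx, hbt⟩, hx'le⟩
          exact hbt (hpt ▸ hps b hbB (hbx ▸ hx'le))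
        · rintro ⟨⟨hpD, hpt⟩, hnp⟩
          refine ⟨⟨hpD, ?_⟩, hpt⟩
          intro b hbB hble
          rw [hpt]
          by_contra hts
          exact hnp ⟨Fin.init b, ⟨b, hbB, rfl, hts⟩, hble⟩
      rw [e1, e2]
      exact hIH
    have stepB : E.card ≤ (D.filter (fun p => ¬ ∃ b ∈ B, b ≤ p)).card := by
      set G := D.filter (fun p => ¬ ∃ b ∈ B, b ≤ p) with hGdef
      have hGD : G ⊆ D := Finset.filter_subset _ _
      rw [Finset.card_eq_sum_card_fiberwise
        (f := Fin.init) (t := D.image Fin.init)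
        (fun p hp => Finset.mem_image_of_mem _ (hED hp))]
      rw [Finset.card_eq_sum_card_fiberwise
        (f := Fin.init) (t := D.image Fin.init)
        (fun p hp => Finset.mem_image_of_mem _ (hGD hp))]
      apply Finset.sum_le_sum
      intro x _
      have injfib : ∀ (s : Finset (Fin (d+1) → ℕ)), (∀ p ∈ s, Fin.init p = x) →
          (s.image (fun p => p (Fin.last d))).card = s.card := by
        intro s hs
        apply Finset.card_image_of_injOn
        intro p hp q hq hpq
        have hpq' : p (Fin.last d) = q (Fin.last d) := hpq
        calc p = Fin.snoc (Fin.init p) (p (Fin.last d)) := (Fin.snoc_init_self p).symm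
          _ = Fin.snoc (Fin.init q) (q (Fin.last d)) := by rw [hs p hp, hs q hq, hpq']
          _ = q := Fin.snoc_init_self q
      have memfib : ∀ (s : Finset (Fin (d+1) → ℕ)) (u : ℕ),
          u ∈ (s.filter (fun p => Fin.init p = x)).image (fun p => p (Fin.last d)) ↔
            Fin.snoc x u ∈ s := by
        intro s u
        rw [Finset.mem_image]
        constructor
        · rintro ⟨p, hp, rfl⟩
          rw [Finset.mem_filter] at hp
          rw [← hp.2, Fin.snoc_init_self]
          exact hp.1
        · intro h
          exact ⟨Fin.snoc x u, Finset.mem_filter.mpr ⟨h, by simp⟩, by simp⟩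
      rw [← injfib (E.filter (fun p => Fin.init p = x))
            (fun p hp => (Finset.mem_filter.mp hp).2),
          ← injfib (G.filter (fun p => Fin.init p = x))
            (fun p hp => (Finset.mem_filter.mp hp).2)]
      set Dx := (D.filter (fun p => Fin.init p = x)).image (fun p => p (Fin.last d)) with hDxdef
      have hDxdown : ∀ ⦃u u' : ℕ⦄, u' ≤ u → u ∈ Dx → u' ∈ Dx := by
        intro u u' huu hu
        rw [hDxdef, memfib] at hu ⊢
        apply hD _ _ hu
        intro j
        rcases Fin.eq_castSucc_or_eq_last j with ⟨k, rfl⟩ | rfl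
        · simp [Fin.snoc_castSucc]
        · simpa [Fin.snoc_last] using huu
      have hDxr := downset_nat_range Dx hDxdown
      have memEx : ∀ u, u ∈ (E.filter (fun p => Fin.init p = x)).image
            (fun p => p (Fin.last d)) ↔
          (u ∈ Dx ∧ ∀ b ∈ B, Fin.init b ≤ x → u ∈ R b (Fin.last d) b) := by
        intro u
        rw [memfib, hE, Finset.mem_filter, hDxdef, memfib]
        constructor
        · rintro ⟨hin, hcond⟩
          refine ⟨hin, fun b hb hbx => ?_⟩
          have := hcond b hb (by simpa using hbx)
          simpa using this
        · rintro ⟨hin, hcond⟩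
          refine ⟨hin, fun b hb hbx => ?_⟩
          rw [Fin.snoc_last]
          exact hcond b hb (by simpa using hbx)
      have memGx : ∀ u, u ∈ (G.filter (fun p => Fin.init p = x)).image
            (fun p => p (Fin.last d)) ↔
          (u ∈ Dx ∧ ∀ b ∈ B, Fin.init b ≤ x → ¬ b (Fin.last d) ≤ u) := by
        intro u
        rw [memfib, hGdef, Finset.mem_filter, hDxdef, memfib]
        constructor
        · rintro ⟨hin, hcond⟩
          exact ⟨hin, fun b hb hbx hble => hcond ⟨b, hb, (le_snoc_iff b x u).mpr ⟨hbx, hble⟩⟩⟩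
        · rintro ⟨hin, hcond⟩
          refine ⟨hin, ?_⟩
          rintro ⟨b, hb, hle⟩
          obtain ⟨hle1, hle2⟩ := (le_snoc_iff b x u).mp hle
          exact hcond b hb hle1 hle2
      by_cases hrel : ∃ b, b ∈ B ∧ Fin.init b ≤ x
      · obtain ⟨b₀, hb₀, hb₀x⟩ := hrel
        have hne : {n : ℕ | ∃ b, b ∈ B ∧ Fin.init b ≤ x ∧ b (Fin.last d) = n}.Nonempty :=
          ⟨b₀ (Fin.last d), b₀, hb₀, hb₀x, rfl⟩
        obtain ⟨bs, hbsB, hbsx, hbsM⟩ := Nat.sInf_mem hne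
        have hGx : (G.filter (fun p => Fin.init p = x)).image (fun p => p (Fin.last d))
            = Finset.range (min Dx.card (sInf {n : ℕ | ∃ b, b ∈ B ∧ Fin.init b ≤ x ∧ b (Fin.last d) = n})) := by
          ext u
          rw [memGx u, Finset.mem_range, lt_min_iff]
          constructor
          · rintro ⟨hu, hcond⟩
            constructor
            · have : u ∈ Finset.range Dx.card := hDxr ▸ hu
              simpa using this
            · have := hcond bs hbsB hbsx
              exact hbsM ▸ Nat.lt_of_not_le this
          · rintro ⟨hu1, hu2⟩
            refine ⟨by rw [hDxr]; simpa using hu1, ?_⟩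
            intro b hb hbx hble
            have hMle : sInf {n : ℕ | ∃ b, b ∈ B ∧ Fin.init b ≤ x ∧ b (Fin.last d) = n} ≤ b (Fin.last d) := Nat.sInf_le ⟨b, hb, hbx, rfl⟩
            exact absurd hble (Nat.not_le.mpr (lt_of_lt_of_le hu2 hMle))
        rw [hGx, Finset.card_range]
        refine le_min ?_ ?_
        · apply Finset.card_le_card
          intro u hu
          exact ((memEx u).mp hu).1
        · calc ((E.filter (fun p => Fin.init p = x)).image (fun p => p (Fin.last d))).card
              ≤ (R bs (Fin.last d) bs).card := by
                apply Finset.card_le_card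
                intro u hu
                exact ((memEx u).mp hu).2 bs hbsB hbsx
            _ ≤ bs (Fin.last d) := Scard bs hbsB
            _ = sInf {n : ℕ | ∃ b, b ∈ B ∧ Fin.init b ≤ x ∧ b (Fin.last d) = n} := hbsM
      · apply Finset.card_le_card
        intro u hu
        rw [memEx] at hu
        rw [memGx]
        exact ⟨hu.1, fun b hb hbx => absurd ⟨b, hb, hbx⟩ hrel⟩
    exact le_trans stepA stepB

/-- Abstract Schwartz–Zippel type lemma.
`D` is a finite down-set in `ℕ^d`, `A ⊆ D`, `B ⊆ ℕ^d`.
For each `b ∈ B` there is a family of "bad value" sets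
`R b i n ⊂ ℕ` (depending only on the coordinates of `n` after `i`) such that:
(1) if `n j ∉ R b j n` for all `j > i`, then `|R b i n| ≤ b i`;
(2) for every `a ∈ A`, if `a j ∉ R b j a` for all `j > 0`, then `a 0 ∈ R b 0 a`.
Then `|A| ≤ |D \ ↑B|`. -/
theorem stmt6 (d : ℕ) (hd : 1 ≤ d)
    (D : Finset (Fin d → ℕ))
    (hD : ∀ p q : Fin d → ℕ, q ∈ D → p ≤ q → p ∈ D)
    (A : Finset (Fin d → ℕ)) (hA : A ⊆ D)
    (B : Set (Fin d → ℕ))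
    (R : (Fin d → ℕ) → Fin d → (Fin d → ℕ) → Finset ℕ)
    (hdep : ∀ b ∈ B, ∀ (i : Fin d) (n n' : Fin d → ℕ),
      (∀ j, i < j → n j = n' j) → R b i n = R b i n')
    (h1 : ∀ b ∈ B, ∀ (i : Fin d) (n : Fin d → ℕ),
      (∀ j, i < j → n j ∉ R b j n) → (R b i n).card ≤ b i)
    (h2 : ∀ b ∈ B, ∀ a ∈ A,
      (∀ j : Fin d, 0 < j.1 → a j ∉ R b j a) →
        a ⟨0, by omega⟩ ∈ R b ⟨0, by omega⟩ a) :
    A.card ≤ (D.filter (fun p : Fin d → ℕ => ¬ ∃ b ∈ B, b ≤ p)).card := by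
  apply sz_aux d D hD A hA B R hdep h1
  intro b hb a ha
  by_cases hJ : (Finset.univ.filter (fun j : Fin d => a j ∈ R b j a)).Nonempty
  · set J := Finset.univ.filter (fun j : Fin d => a j ∈ R b j a) with hJdef
    refine ⟨J.max' hJ, ?_, ?_⟩
    · exact (Finset.mem_filter.mp (J.max'_mem hJ)).2
    · intro k hk
      intro hmem
      have hkJ : k ∈ J := Finset.mem_filter.mpr ⟨Finset.mem_univ k, hmem⟩
      exact absurd hk (not_lt.mpr (J.le_max' k hkJ))
  · exfalso
    rw [Finset.not_nonempty_iff_eq_empty, Finset.filter_eq_empty_iff] at hJ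
    have hall : ∀ j : Fin d, a j ∉ R b j a := fun j => hJ (Finset.mem_univ j)
    exact hall _ (h2 b hb a ha (fun j _ => hall j))
end

section
/- Fix d ≥ 1, k ≥ 2, and 𝐤 ∈ ℕ_{>0}^d, and for 1 ≤ l ≤ k set n_l := |𝒮^𝐤_l ∩ {|𝐚| ≤ k}| (cardinality of the sublevel set of degree l within degree ≤ k) and 𝒦_l := Σ_{𝐚, 1≤|𝐚|≤l, 𝐚≼𝐤} |𝐚|. Define α_l ∈ ℝ by n_k/n_l = α_l·(n_k/n_{l+1}) + (1−α_l)·(𝒦_k/𝒦_l) for 1 ≤ l < k, and β_l by 𝒦_k/𝒦_l = (1−β_l)·(𝒦_k/𝒦_{l−1}) + β_l·(n_k/n_l) for 1 < l < k, with β₁ := 1, α₀ := 0, β_k := 1. Define a linear map ℳ on ℝ^{2(k−1)} with coordinates indexed by q(1),…,q(k−1),t(1),…,t(k−1) by: (ℳv)_{q(l)} = (1−α_l)v_{t(l)} + ((l+2)/(l+1))(1−β_{l+1})v_{q(l+1)} for 1 ≤ l ≤ k−2; (ℳv)_{q(k−1)} = (1−α_{k−1})v_{t(k−1)}; (ℳv)_{t(l)}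 = ((l+1)/l)β_l v_{q(l)} + α_{l−1}v_{t(l−1)} for 2 ≤ l ≤ k−1; (ℳv)_{t(1)} = 2β₁v_{q(1)}. Then the vector v with v_{q(l)} = 𝒦_l/(l+1) and v_{t(l)} = n_l satisfies ℳv = v. -/
open Finset

set_option maxHeartbeats 1600000 in
/-- The Perron–Frobenius fixed-point theorem for the induction-on-scales
matrix `ℳ`: the vector `v` with `v_{q(l)} = 𝒦_l/(l+1)`, `v_{t(l)} = n_l`
satisfies `ℳ v = v`, written out coordinatewise. -/
theorem stmt10 (d K : ℕ) (hd : 1 ≤ d) (hK : 2 ≤ K)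
    (k : Fin d → ℕ) (hk : ∀ i, 0 < k i)
    (n 𝒦 : ℕ → ℝ)
    (hn : ∀ l, n l = (((Finset.Iic k).filter
      (fun a : Fin d → ℕ => 1 ≤ ∑ i, a i ∧ (∑ i, a i) ≤ min l K)).card : ℝ))
    (h𝒦 : ∀ l, 𝒦 l = ((∑ a ∈ (Finset.Iic k).filter
      (fun a : Fin d → ℕ => 1 ≤ ∑ i, a i ∧ (∑ i, a i) ≤ min l K), ∑ i, a i : ℕ) : ℝ))
    -- strictness, making `α`, `β` well defined
    (hstrict : ∀ l, 1 ≤ l → l < K → n l < n K ∧ 𝒦 l < 𝒦 K)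
    -- implicit definitions of `α_l` and `β_l`
    (α β : ℕ → ℝ)
    (hα : ∀ l, 1 ≤ l → l < K →
      n K / n l = α l * (n K / n (l + 1)) + (1 - α l) * (𝒦 K / 𝒦 l))
    (hβ : ∀ l, 1 < l → l < K →
      𝒦 K / 𝒦 l = (1 - β l) * (𝒦 K / 𝒦 (l - 1)) + β l * (n K / n l))
    (hβ1 : β 1 = 1) (hα0 : α 0 = 0) (hβK : β K = 1) :
    -- `ℳ v = v` in the `q(l)` coordinates
    (∀ l, 1 ≤ l → l ≤ K - 2 →
      𝒦 l / (l + 1)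
        = (1 - α l) * n l
          + (((l : ℝ) + 2) / ((l : ℝ) + 1)) * (1 - β (l + 1)) * (𝒦 (l + 1) / (l + 2)))
    ∧ (𝒦 (K - 1) / ((K : ℝ) - 1 + 1) = (1 - α (K - 1)) * n (K - 1))
    -- `ℳ v = v` in the `t(l)` coordinates
    ∧ (∀ l, 2 ≤ l → l ≤ K - 1 →
      n l = (((l : ℝ) + 1) / (l : ℝ)) * β l * (𝒦 l / (l + 1)) + α (l - 1) * n (l - 1))
    ∧ (n 1 = 2 * β 1 * (𝒦 1 / 2)) := by
  set S : ℕ → Finset (Fin d → ℕ) := fun l => (Finset.Iic k).filter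
      (fun a : Fin d → ℕ => 1 ≤ ∑ i, a i ∧ (∑ i, a i) ≤ min l K) with hSdef
  clear_value S
  have hmem : ∀ m x, x ∈ S m ↔ (x ∈ Finset.Iic k ∧ (1 ≤ ∑ i, x i ∧ ∑ i, x i ≤ min m K)) := by
    intro m x; simp only [hSdef, Finset.mem_filter, and_assoc]
  have hsub : ∀ a b : ℕ, a ≤ b → S a ⊆ S b := by
    intro a b hab x hx
    rw [hmem] at hx ⊢
    exact ⟨hx.1, hx.2.1, hx.2.2.trans (by omega)⟩
  have hNpos : ∀ m, 1 ≤ m → 0 < (S m).card := by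
    intro m hm
    have hsum : (∑ i : Fin d, if i = (⟨0, hd⟩ : Fin d) then 1 else 0) = 1 := by simp
    refine Finset.card_pos.mpr ⟨fun i => if i = ⟨0, hd⟩ then 1 else 0, (hmem _ _).mpr
      ⟨Finset.mem_Iic.mpr (fun i => ?_), ?_⟩⟩
    · dsimp only; split
      · exact hk i
      · exact Nat.zero_le _
    · beta_reduce
      rw [hsum]
      omega
  have hrecN : ∀ m, m + 1 ≤ K → (∑ a ∈ S (m+1), ∑ i, a i) + (m+1) * (S m).card
      = (∑ a ∈ S m, ∑ i, a i) + (m+1) * (S (m+1)).card := by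
    intro m hm
    have hss := hsub m (m+1) (Nat.le_succ m)
    have hcard := Finset.card_sdiff_add_card_eq_card hss
    have hdeg : ∀ x ∈ S (m+1) \ S m, (∑ i, x i) = m + 1 := by
      intro x hx
      obtain ⟨hxin, hxout⟩ := Finset.mem_sdiff.mp hx
      rw [hmem] at hxin
      have h3 : ¬ (1 ≤ ∑ i, x i ∧ ∑ i, x i ≤ min m K) :=
        fun h => hxout ((hmem m x).mpr ⟨hxin.1, h⟩)
      omega
    have hDsum : ∑ a ∈ S (m+1) \ S m, ∑ i, a i = (m+1) * (S (m+1) \ S m).card := by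
      rw [Finset.sum_congr rfl hdeg, Finset.sum_const, smul_eq_mul, mul_comm]
    have hsplit : (∑ a ∈ S (m+1) \ S m, ∑ i, a i) + ∑ a ∈ S m, ∑ i, a i
        = ∑ a ∈ S (m+1), ∑ i, a i := Finset.sum_sdiff hss
    rw [← hsplit, hDsum, ← hcard]
    ring
  have hsum_le : ∀ m, m < K → (∑ a ∈ S m, ∑ i, a i) ≤ m * (S m).card := by
    intro m hm
    rw [mul_comm, ← smul_eq_mul]
    refine Finset.sum_le_card_nsmul _ _ _ (fun x hx => ?_)
    have := ((hmem m x).mp hx).2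
    omega
  have hsum_ge : ∀ m, (S m).card ≤ ∑ a ∈ S m, ∑ i, a i := by
    intro m
    have := Finset.card_nsmul_le_sum (S m) (fun a => ∑ i, a i) 1
      (fun x hx => ((hmem m x).mp hx).2.1)
    simpa using this
  have h1N : (∑ a ∈ S 1, ∑ i, a i) = (S 1).card := by
    have hdeg : ∀ x ∈ S 1, (∑ i, x i) = 1 := by
      intro x hx
      have h2 := ((hmem 1 x).mp hx).2
      omega
    rw [Finset.sum_congr rfl hdeg, Finset.sum_const, smul_eq_mul, mul_one]
  have hltN : ∀ l, 1 ≤ l → l < K → (S l).card < (S K).card →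
      (S K).card * (∑ a ∈ S l, ∑ i, a i) < (∑ a ∈ S K, ∑ i, a i) * (S l).card := by
    intro l h1l hlK hclt
    clear h1N
    have hss := hsub l K hlK.le
    have hcard := Finset.card_sdiff_add_card_eq_card hss
    have hpos := hNpos l h1l
    have hDpos : 0 < (S K \ S l).card := by omega
    have hdeg : ∀ x ∈ S K \ S l, l + 1 ≤ ∑ i, x i := by
      intro x hx
      obtain ⟨hxin, hxout⟩ := Finset.mem_sdiff.mp hx
      rw [hmem] at hxin
      have h3 : ¬ (1 ≤ ∑ i, x i ∧ ∑ i, x i ≤ min l K) :=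
        fun h => hxout ((hmem l x).mpr ⟨hxin.1, h⟩)
      omega
    have hDsum : (S K \ S l).card * (l + 1) ≤ ∑ a ∈ S K \ S l, ∑ i, a i := by
      rw [← smul_eq_mul]
      exact Finset.card_nsmul_le_sum _ _ _ hdeg
    have hsl := hsum_le l hlK
    have hsplit : (∑ a ∈ S K \ S l, ∑ i, a i) + ∑ a ∈ S l, ∑ i, a i
        = ∑ a ∈ S K, ∑ i, a i := Finset.sum_sdiff hss
    have e1 : ((S K \ S l).card + (S l).card) * (∑ a ∈ S l, ∑ i, a i)
        = (S K).card * (∑ a ∈ S l, ∑ i, a i) := by rw [hcard]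
    have e2 : ((∑ a ∈ S K \ S l, ∑ i, a i) + ∑ a ∈ S l, ∑ i, a i) * (S l).card
        = (∑ a ∈ S K, ∑ i, a i) * (S l).card := by rw [hsplit]
    nlinarith [e1, e2, mul_le_mul_left hDsum ((S l).card),
      mul_le_mul_right hsl ((S K \ S l).card), Nat.mul_le_mul hDpos hpos]
  -- pass to the real-valued quantities
  have hn' : ∀ m, n m = ((S m).card : ℝ) := by
    intro m; rw [hn m]; simp only [hSdef]
  have h𝒦' : ∀ m, 𝒦 m = ((∑ a ∈ S m, ∑ i, a i : ℕ) : ℝ) := by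
    intro m; rw [h𝒦 m]; simp only [hSdef]
  have npos : ∀ m, 1 ≤ m → 0 < n m := by
    intro m hm; rw [hn']; exact_mod_cast hNpos m hm
  have hn𝒦 : ∀ m, n m ≤ 𝒦 m := by
    intro m; rw [hn', h𝒦']; exact_mod_cast hsum_ge m
  have 𝒦pos : ∀ m, 1 ≤ m → 0 < 𝒦 m := fun m hm => lt_of_lt_of_le (npos m hm) (hn𝒦 m)
  have nmono : ∀ a b : ℕ, a ≤ b → n a ≤ n b := by
    intro a b h; rw [hn', hn']; exact_mod_cast Finset.card_le_card (hsub a b h)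
  have recR : ∀ m, m + 1 ≤ K → 𝒦 (m+1) = 𝒦 m + ((m:ℝ)+1) * (n (m+1) - n m) := by
    intro m hm
    have h := hrecN m hm
    have h2 : 𝒦 (m+1) + ((m:ℝ)+1) * n m = 𝒦 m + ((m:ℝ)+1) * n (m+1) := by
      rw [hn', hn', h𝒦', h𝒦']
      exact_mod_cast h
    linarith
  have ltR : ∀ l, 1 ≤ l → l < K → n K * 𝒦 l < 𝒦 K * n l := by
    intro l h1 h2
    have hc : (S l).card < (S K).card := by
      have h := (hstrict l h1 h2).1
      rw [hn', hn'] at h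
      exact_mod_cast h
    have h' := hltN l h1 h2 hc
    rw [hn', hn', h𝒦', h𝒦']
    exact_mod_cast h'
  have h𝒦1 : 𝒦 1 = n 1 := by rw [hn', h𝒦']; exact_mod_cast h1N
  clear h1N hrecN hsum_le hsum_ge hltN hNpos hsub hmem
  refine ⟨?_, ?_, ?_, ?_⟩
  · -- the q(l) coordinates, 1 ≤ l ≤ K - 2
    intro l h1l hl2
    have hlK : l + 2 ≤ K := by omega
    have hnl := npos l h1l
    have hnl1 := npos (l+1) (by omega)
    have hnK := npos K (by omega)
    have h𝒦l := 𝒦pos l h1l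
    have h𝒦l1 := 𝒦pos (l+1) (by omega)
    have h𝒦K := 𝒦pos K (by omega)
    have hαe := hα l h1l (by omega)
    have hβe := hβ (l+1) (by omega) (by omega)
    rw [show l+1-1 = l from by omega] at hβe
    have H1 : n K * n (l+1) * 𝒦 l
        = α l * (n K * n l * 𝒦 l) + (1 - α l) * (𝒦 K * n l * n (l+1)) := by
      field_simp at hαe
      linear_combination hαe
    have H2 : 𝒦 K * n (l+1) * 𝒦 l
        = (1 - β (l+1)) * (𝒦 K * n (l+1) * 𝒦 (l+1)) + β (l+1) * (n K * 𝒦 l * 𝒦 (l+1)) := by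
      field_simp at hβe
      linear_combination hβe
    have H3 : 𝒦 (l+1) = 𝒦 l + ((l:ℝ)+1) * (n (l+1) - n l) := recR l (by omega)
    have hΔne : n K * 𝒦 l - 𝒦 K * n (l+1) ≠ 0 := by
      have h1 : n K * 𝒦 l < 𝒦 K * n l := ltR l h1l (by omega)
      have h2 : 𝒦 K * n l ≤ 𝒦 K * n (l+1) :=
        mul_le_mul_of_nonneg_left (nmono l (l+1) (by omega)) h𝒦K.le
      intro h
      nlinarith
    have G' : 𝒦 l = ((l:ℝ)+1)*(1 - α l)*(n l) + (1 - β (l+1))*𝒦 (l+1) := by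
      refine mul_right_cancel₀ hΔne ?_
      linear_combination (-((l:ℝ)+1)) * H1 - H2 - (n K * 𝒦 l) * H3
    have h1ne : ((l:ℝ)+1) ≠ 0 := by positivity
    have h2ne : ((l:ℝ)+2) ≠ 0 := by positivity
    field_simp
    linear_combination G'
  · -- the q(K-1) coordinate
    obtain ⟨m, rfl⟩ : ∃ m, K = m + 2 := ⟨K - 2, by omega⟩
    rw [show m + 2 - 1 = m + 1 from by omega]
    have hnK := npos (m+2) (by omega)
    have hnl := npos (m+1) (by omega)
    have h𝒦l := 𝒦pos (m+1) (by omega)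
    have hlt := (hstrict (m+1) (by omega) (by omega)).2
    have hαe := hα (m+1) (by omega) (by omega)
    rw [show m+1+1 = m+2 from by omega, div_self hnK.ne'] at hαe
    have H1 : n (m+2) * 𝒦 (m+1)
        = α (m+1) * (n (m+1) * 𝒦 (m+1)) + (1 - α (m+1)) * (n (m+1) * 𝒦 (m+2)) := by
      field_simp at hαe
      linear_combination hαe
    have H3 : 𝒦 (m+2) = 𝒦 (m+1) + ((m:ℝ)+2) * (n (m+2) - n (m+1)) := by
      have h := recR (m+1) (by omega)
      rw [show m+1+1 = m+2 from by omega] at h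
      push_cast at h ⊢
      linarith
    have hΔne : 𝒦 (m+1) - 𝒦 (m+2) ≠ 0 := by
      intro h; nlinarith
    have G' : 𝒦 (m+1) = (((m:ℝ)+2) * (1 - α (m+1))) * n (m+1) := by
      refine mul_right_cancel₀ hΔne ?_
      linear_combination (-((m:ℝ)+2)) * H1 - 𝒦 (m+1) * H3
    rw [show (((m+2:ℕ)):ℝ) - 1 + 1 = (m:ℝ) + 2 from by push_cast; ring]
    rw [div_eq_iff (by positivity : ((m:ℝ)+2) ≠ 0)]
    linear_combination G'
  · -- the t(l) coordinates, 2 ≤ l ≤ K - 1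
    intro l h2l hlK1
    obtain ⟨j, rfl⟩ : ∃ j, l = j + 1 := ⟨l - 1, by omega⟩
    rw [show j + 1 - 1 = j from by omega]
    have h1j : 1 ≤ j := by omega
    have hjK : j + 1 < K := by omega
    have hnj := npos j h1j
    have hnj1 := npos (j+1) (by omega)
    have hnK := npos K (by omega)
    have h𝒦j := 𝒦pos j h1j
    have h𝒦j1 := 𝒦pos (j+1) (by omega)
    have h𝒦K := 𝒦pos K (by omega)
    have hαe := hα j h1j (by omega)
    have hβe := hβ (j+1) (by omega) hjK
    rw [show j+1-1 = j from by omega] at hβe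
    have H1 : n K * n (j+1) * 𝒦 j
        = α j * (n K * n j * 𝒦 j) + (1 - α j) * (𝒦 K * n j * n (j+1)) := by
      field_simp at hαe
      linear_combination hαe
    have H2 : 𝒦 K * n (j+1) * 𝒦 j
        = (1 - β (j+1)) * (𝒦 K * n (j+1) * 𝒦 (j+1)) + β (j+1) * (n K * 𝒦 j * 𝒦 (j+1)) := by
      field_simp at hβe
      linear_combination hβe
    have H3 : 𝒦 (j+1) = 𝒦 j + ((j:ℝ)+1) * (n (j+1) - n j) := recR j (by omega)
    have hΔne : n K * 𝒦 j - 𝒦 K * n (j+1) ≠ 0 := by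
      have h1 : n K * 𝒦 j < 𝒦 K * n j := ltR j h1j (by omega)
      have h2 : 𝒦 K * n j ≤ 𝒦 K * n (j+1) :=
        mul_le_mul_of_nonneg_left (nmono j (j+1) (by omega)) h𝒦K.le
      intro h
      nlinarith
    have G' : ((j:ℝ)+1) * n (j+1) = β (j+1) * 𝒦 (j+1) + ((j:ℝ)+1) * α j * n j := by
      refine mul_right_cancel₀ hΔne ?_
      linear_combination ((j:ℝ)+1) * H1 + H2 + (𝒦 K * n (j+1)) * H3
    have h1ne : ((j:ℝ)+1) ≠ 0 := by positivity
    have hjne : ((j:ℝ)) ≠ 0 := by positivity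
    push_cast
    field_simp
    linear_combination G'
  · -- the t(1) coordinate
    rw [hβ1, h𝒦1]
    ring
end

section
/- With the notation of the fixed-point theorem (n_l, 𝒦_l, α_{k−1}, and the vector v with v_{q(l)} = 𝒦_l/(l+1), v_{t(k−1)} = n_{k−1}), for d ≥ 1 and k ≥ 2 one has Σ_{l=1}^{k−1} v_{q(l)}/l = v_{t(k−1)}·α_{k−1}; explicitly, Σ_{l=1}^{k−1} 𝒦_l/(l(l+1)) = n_{k−1} − 𝒦_{k−1}/k. -/
open Finset

/-- `Σ_{l=1}^{k−1} v_{q(l)}/l = v_{t(k−1)}·α_{k−1}`; explicitly,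
`Σ_{l=1}^{k−1} 𝒦_l/(l(l+1)) = n_{k−1} − 𝒦_{k−1}/k`. -/
theorem stmt11 (d K : ℕ) (hd : 1 ≤ d) (hK : 2 ≤ K)
    (k : Fin d → ℕ) (hk : ∀ i, 0 < k i)
    (n 𝒦 : ℕ → ℝ)
    (hn : ∀ l, n l = (((Finset.Iic k).filter
      (fun a : Fin d → ℕ => 1 ≤ ∑ i, a i ∧ (∑ i, a i) ≤ min l K)).card : ℝ))
    (h𝒦 : ∀ l, 𝒦 l = ((∑ a ∈ (Finset.Iic k).filter
      (fun a : Fin d → ℕ => 1 ≤ ∑ i, a i ∧ (∑ i, a i) ≤ min l K), ∑ i, a i : ℕ) : ℝ))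
    (α : ℝ)
    (hne : 𝒦 (K - 1) ≠ 𝒦 K)
    -- defining relation of `α_{k−1}`
    (hα : n K / n (K - 1) = α + (1 - α) * (𝒦 K / 𝒦 (K - 1))) :
    (∑ l ∈ Finset.Icc 1 (K - 1), (𝒦 l / (l + 1)) / (l : ℝ)) = n (K - 1) * α
    ∧ (∑ l ∈ Finset.Icc 1 (K - 1), 𝒦 l / ((l : ℝ) * ((l : ℝ) + 1)))
        = n (K - 1) - 𝒦 (K - 1) / (K : ℝ) := by
  -- set splitting lemma
  have hset : ∀ j : ℕ, 1 ≤ j → j ≤ K →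
      (Finset.Iic k).filter
        (fun a : Fin d → ℕ => 1 ≤ ∑ i, a i ∧ (∑ i, a i) ≤ min j K)
      = (Finset.Iic k).filter
        (fun a : Fin d → ℕ => 1 ≤ ∑ i, a i ∧ (∑ i, a i) ≤ min (j-1) K)
        ∪ (Finset.Iic k).filter (fun a : Fin d → ℕ => ∑ i, a i = j) := by
    intro j h1 h2
    ext a
    simp only [Finset.mem_filter, Finset.mem_union]
    constructor
    · rintro ⟨hm, h3, h4⟩
      by_cases h : ∑ i, a i = j
      · exact Or.inr ⟨hm, h⟩
      · exact Or.inl ⟨hm, h3, by omega⟩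
    · rintro (⟨hm, h3, h4⟩ | ⟨hm, h⟩) <;> exact ⟨hm, by omega, by omega⟩
  have hdisj : ∀ j : ℕ, 1 ≤ j → j ≤ K →
      Disjoint ((Finset.Iic k).filter
        (fun a : Fin d → ℕ => 1 ≤ ∑ i, a i ∧ (∑ i, a i) ≤ min (j-1) K))
        ((Finset.Iic k).filter (fun a : Fin d → ℕ => ∑ i, a i = j)) := by
    intro j h1 h2
    rw [Finset.disjoint_left]
    intro a ha hb
    simp only [Finset.mem_filter] at ha hb
    omega
  -- key recursion: 𝒦 j = 𝒦 (j-1) + j * (n j - n (j-1))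
  have key : ∀ j : ℕ, 1 ≤ j → j ≤ K →
      𝒦 j = 𝒦 (j-1) + (j : ℝ) * (n j - n (j-1)) := by
    intro j h1 h2
    have hcard : n j = n (j-1) +
        (((Finset.Iic k).filter (fun a : Fin d → ℕ => ∑ i, a i = j)).card : ℝ) := by
      rw [hn, hn, hset j h1 h2, Finset.card_union_of_disjoint (hdisj j h1 h2)]
      push_cast; ring
    have hsum : 𝒦 j = 𝒦 (j-1) +
        (j : ℝ) * (((Finset.Iic k).filter (fun a : Fin d → ℕ => ∑ i, a i = j)).card : ℝ) := by
      rw [h𝒦, h𝒦, hset j h1 h2, Finset.sum_union (hdisj j h1 h2)]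
      have : ∑ a ∈ (Finset.Iic k).filter (fun a : Fin d → ℕ => ∑ i, a i = j),
          ∑ i, a i = ((Finset.Iic k).filter (fun a : Fin d → ℕ => ∑ i, a i = j)).card * j := by
        rw [Finset.sum_congr rfl (fun a ha => (Finset.mem_filter.mp ha).2),
          Finset.sum_const, smul_eq_mul]
      rw [this]; push_cast; ring
    rw [hsum, hcard]; ring
  -- main telescoping identity by induction
  have main : ∀ m : ℕ, m ≤ K - 1 →
      (∑ l ∈ Finset.Icc 1 m, 𝒦 l / ((l : ℝ) * ((l : ℝ) + 1)))
        = n m - 𝒦 m / ((m : ℝ) + 1) := by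
    intro m
    induction m with
    | zero =>
      intro _
      have hempty : (Finset.Iic k).filter
          (fun a : Fin d → ℕ => 1 ≤ ∑ i, a i ∧ (∑ i, a i) ≤ min 0 K) = ∅ := by
        apply Finset.filter_false_of_mem
        intro a _
        omega
      have hn0 : n 0 = 0 := by rw [hn, hempty]; simp
      have h𝒦0 : 𝒦 0 = 0 := by rw [h𝒦, hempty]; simp
      simp [hn0, h𝒦0]
    | succ m ih =>
      intro hm
      have hm' : m ≤ K - 1 := by omega
      have hkey := key (m+1) (by omega) (by omega)
      simp only [Nat.add_sub_cancel] at hkey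
      rw [Finset.sum_Icc_succ_top (by omega : 1 ≤ m + 1), ih hm', hkey]
      have h1 : ((m : ℝ) + 1) ≠ 0 := by positivity
      have h2 : ((m : ℝ) + 2) ≠ 0 := by positivity
      push_cast
      field_simp
      ring
  have hmain := main (K - 1) le_rfl
  have hcast : ((K - 1 : ℕ) : ℝ) = (K : ℝ) - 1 := by
    have : (1 : ℕ) ≤ K := by omega
    push_cast [this]; ring
  rw [hcast] at hmain
  have hK1 : (K : ℝ) - 1 + 1 = (K : ℝ) := by ring
  rw [hK1] at hmain
  -- positivity of n (K-1) and 𝒦 (K-1)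
  have hmem : (fun i : Fin d => if i = ⟨0, hd⟩ then 1 else 0) ∈
      (Finset.Iic k).filter
        (fun a : Fin d → ℕ => 1 ≤ ∑ i, a i ∧ (∑ i, a i) ≤ min (K-1) K) := by
    simp only [Finset.mem_filter, Finset.mem_Iic]
    refine ⟨?_, ?_⟩
    · intro i
      by_cases h : i = ⟨0, hd⟩
      · simp only [h, if_pos rfl]
        exact hk _
      · simp [h]
    · rw [Finset.sum_ite_eq' Finset.univ (⟨0, hd⟩ : Fin d) (fun _ => 1)]
      simp
      omega
  have hnpos : 0 < n (K - 1) := by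
    rw [hn]
    have := Finset.card_pos.mpr ⟨_, hmem⟩
    exact_mod_cast this
  have h𝒦pos : 0 < 𝒦 (K - 1) := by
    rw [h𝒦]
    have hle : ((Finset.Iic k).filter
        (fun a : Fin d → ℕ => 1 ≤ ∑ i, a i ∧ (∑ i, a i) ≤ min (K-1) K)).card
        ≤ ∑ a ∈ (Finset.Iic k).filter
        (fun a : Fin d → ℕ => 1 ≤ ∑ i, a i ∧ (∑ i, a i) ≤ min (K-1) K), ∑ i, a i := by
      have h := Finset.card_nsmul_le_sum ((Finset.Iic k).filter
        (fun a : Fin d → ℕ => 1 ≤ ∑ i, a i ∧ (∑ i, a i) ≤ min (K-1) K))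
        (fun a => ∑ i, a i) 1 (fun a ha => (Finset.mem_filter.mp ha).2.1)
      simpa using h
    have hc := Finset.card_pos.mpr ⟨_, hmem⟩
    have : (0 : ℕ) < ∑ a ∈ (Finset.Iic k).filter
        (fun a : Fin d → ℕ => 1 ≤ ∑ i, a i ∧ (∑ i, a i) ≤ min (K-1) K), ∑ i, a i :=
      lt_of_lt_of_le hc hle
    exact_mod_cast this
  have hKpos : (0 : ℝ) < (K : ℝ) := by positivity
  -- from hα derive n (K-1) * α = n (K-1) - 𝒦 (K-1) / K
  have hkeyK := key K (by omega) (by omega)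
  have hAa : n K - n (K - 1) ≠ 0 := by
    intro h
    apply hne
    rw [hkeyK, h]; ring
  have hα' : n (K - 1) * α = n (K - 1) - 𝒦 (K - 1) / (K : ℝ) := by
    have hn0 : n (K - 1) ≠ 0 := ne_of_gt hnpos
    have h𝒦0 : 𝒦 (K - 1) ≠ 0 := ne_of_gt h𝒦pos
    have hK0 : (K : ℝ) ≠ 0 := ne_of_gt hKpos
    rw [div_eq_iff hn0] at hα
    have h2 : n K * 𝒦 (K - 1) = α * n (K - 1) * 𝒦 (K - 1) + (1 - α) * 𝒦 K * n (K - 1) := by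
      rw [hα]
      field_simp
    rw [hkeyK] at h2
    have hc : 𝒦 (K - 1) * (n K - n (K - 1)) =
        ((1 - α) * n (K - 1) * (K : ℝ)) * (n K - n (K - 1)) := by ring_nf; ring_nf at h2; linarith
    have h3 := mul_right_cancel₀ hAa hc
    field_simp
    linarith [h3]
  constructor
  · rw [hα', ← hmain]
    apply Finset.sum_congr rfl
    intro l hl
    rw [Finset.mem_Icc] at hl
    rw [div_div, mul_comm ((l : ℝ) + 1)]
  · exact hmain
end

section
/- Let Λ_{j,l} denote the number of 𝐚 ∈ ℕ^j with 𝐚 ≼ (k₁,…,k_j) and |𝐚| = l, where k₁ ≤ ⋯ ≤ k_j. Then for all k ≥ 3, Λ_{j,k−2}·Λ_{j,2} ≥ 2·Λ_{j,k} − min(Λ_{j,k−1}, Λ_{j,k−2}). -/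
open Finset

/-- `sgl m c` is the function supported at `m` with value `c`. -/
def sgl {j : ℕ} (m : Fin j) (c : ℕ) : Fin j → ℕ := fun i => if i = m then c else 0

lemma sgl_apply_self {j : ℕ} (m : Fin j) (c : ℕ) : sgl m c m = c := by simp [sgl]

lemma sgl_apply_ne {j : ℕ} {i m : Fin j} (h : i ≠ m) (c : ℕ) : sgl m c i = 0 := by
  simp [sgl, h]

lemma sgl_sum {j : ℕ} (m : Fin j) (c : ℕ) : ∑ i, sgl m c i = c := by
  simp [sgl]

lemma sgl_inj {j : ℕ} {c : ℕ} (hc : c ≠ 0) {m m' : Fin j} (h : sgl m c = sgl m' c) :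
    m = m' := by
  by_contra hne
  have h1 := congrFun h m
  rw [sgl_apply_self, sgl_apply_ne hne] at h1
  exact hc h1

lemma sgl_le {j : ℕ} {m : Fin j} {c : ℕ} {a : Fin j → ℕ} (h : c ≤ a m) : sgl m c ≤ a := by
  rw [Pi.le_def]; intro i
  rcases eq_or_ne i m with rfl | hne
  · rw [sgl_apply_self]; exact h
  · rw [sgl_apply_ne hne]; exact Nat.zero_le _

lemma pairf_le {j : ℕ} {m n : Fin j} {a : Fin j → ℕ} (hmn : m ≠ n)
    (hm : 1 ≤ a m) (hn : 1 ≤ a n) : sgl m 1 + sgl n 1 ≤ a := by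
  rw [Pi.le_def]; intro i
  rcases eq_or_ne i m with rfl | h1
  · rw [Pi.add_apply, sgl_apply_self, sgl_apply_ne hmn]; omega
  · rcases eq_or_ne i n with rfl | h2
    · rw [Pi.add_apply, sgl_apply_self, sgl_apply_ne h1]; omega
    · rw [Pi.add_apply, sgl_apply_ne h1, sgl_apply_ne h2]; exact Nat.zero_le _

lemma exists_le_sum {j : ℕ} (a : Fin j → ℕ) (c : ℕ) (hc : c ≤ ∑ i, a i) :
    ∃ b : Fin j → ℕ, b ≤ a ∧ ∑ i, b i = c := by
  induction c with
  | zero => exact ⟨0, by rw [Pi.le_def]; intro i; exact Nat.zero_le _, by simp⟩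
  | succ n ih =>
    obtain ⟨b, hb, hsum⟩ := ih (Nat.le_of_succ_le hc)
    have hm : ∃ m, b m < a m := by
      by_contra h
      push_neg at h
      have : ∑ i, a i ≤ ∑ i, b i := Finset.sum_le_sum fun i _ => h i
      omega
    obtain ⟨m, hm⟩ := hm
    refine ⟨b + sgl m 1, ?_, ?_⟩
    · rw [Pi.le_def]
      intro i
      rcases eq_or_ne i m with rfl | h
      · rw [Pi.add_apply, sgl_apply_self]
        have := Pi.le_def.mp hb i
        omega
      · rw [Pi.add_apply, sgl_apply_ne h]
        have := Pi.le_def.mp hb i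
        omega
    · simp [Finset.sum_add_distrib, hsum, sgl_sum]

lemma two_decomp {j : ℕ} (a : Fin j → ℕ) (h3 : 3 ≤ ∑ i, a i)
    (i₁ i₂ : Fin j) (hne : i₁ ≠ i₂) (h1 : a i₁ ≠ 0) (h2 : a i₂ ≠ 0) :
    ∃ b₁ b₂ : Fin j → ℕ, b₁ ≠ b₂ ∧ b₁ ≤ a ∧ b₂ ≤ a ∧ ∑ i, b₁ i = 2 ∧ ∑ i, b₂ i = 2 := by
  by_cases hbig : ∃ m, 2 ≤ a m
  · obtain ⟨m, hm⟩ := hbig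
    have hex : ∃ n, n ≠ m ∧ a n ≠ 0 := by
      rcases eq_or_ne m i₁ with rfl | h
      · exact ⟨i₂, fun hc => hne hc.symm, h2⟩
      · exact ⟨i₁, fun hc => h hc.symm, h1⟩
    obtain ⟨n, hnm, han⟩ := hex
    refine ⟨sgl m 2, sgl m 1 + sgl n 1, ?_, sgl_le hm, ?_, sgl_sum m 2, ?_⟩
    · intro h
      have := congrFun h n
      rw [sgl_apply_ne hnm, Pi.add_apply, sgl_apply_ne hnm, sgl_apply_self] at this
      omega
    · exact pairf_le (fun hc => hnm hc.symm) (by omega) (by omega)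
    · simp [Finset.sum_add_distrib, sgl_sum]
  · push_neg at hbig
    set N : Finset (Fin j) := Finset.univ.filter (fun i => a i ≠ 0) with hN
    have hcard : N.card = ∑ i, a i := by
      have h' : ∑ i, a i = ∑ i ∈ N, a i := by
        rw [hN, Finset.sum_filter_ne_zero]
      rw [h', Finset.card_eq_sum_ones]
      apply Finset.sum_congr rfl
      intro i hi
      have h0 : a i ≠ 0 := by simpa [hN] using hi
      have := hbig i
      omega
    have h3N : 3 ≤ N.card := hcard ▸ h3
    have hnonempty : (N \ {i₁, i₂}).Nonempty := by
      rw [← Finset.card_pos]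
      have hc2 : ({i₁, i₂} : Finset (Fin j)).card ≤ 2 :=
        (Finset.card_insert_le _ _).trans (by simp)
      have := Finset.le_card_sdiff ({i₁, i₂} : Finset (Fin j)) N
      omega
    obtain ⟨i₃, hi₃⟩ := hnonempty
    have h31 : i₃ ≠ i₁ := by
      intro h; rw [Finset.mem_sdiff] at hi₃; exact hi₃.2 (by simp [h])
    have h32 : i₃ ≠ i₂ := by
      intro h; rw [Finset.mem_sdiff] at hi₃; exact hi₃.2 (by simp [h])
    have h3mem : a i₃ ≠ 0 := by
      have := (Finset.mem_sdiff.mp hi₃).1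
      simpa [hN] using this
    refine ⟨sgl i₁ 1 + sgl i₂ 1, sgl i₁ 1 + sgl i₃ 1, ?_, ?_, ?_, ?_, ?_⟩
    · intro h
      have := congrFun h i₂
      rw [Pi.add_apply, Pi.add_apply, sgl_apply_ne (fun hc => hne hc.symm),
        sgl_apply_self, sgl_apply_ne (fun hc => h32 hc.symm)] at this
      omega
    · exact pairf_le hne (by omega) (by omega)
    · exact pairf_le (fun hc => h31 hc.symm) (by omega) (by omega)
    · simp [Finset.sum_add_distrib, sgl_sum]
    · simp [Finset.sum_add_distrib, sgl_sum]

/-- Double-counting inequality for level-set cardinalities: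
`Λ_{j,k−2}·Λ_{j,2} ≥ 2·Λ_{j,k} − min(Λ_{j,k−1}, Λ_{j,k−2})` for `k ≥ 3`. -/
theorem stmt12 (j : ℕ) (k : Fin j → ℕ) (hmono : Monotone k)
    (Λ : ℕ → ℕ)
    (hΛ : ∀ l, Λ l = ((Finset.Iic k).filter
      (fun a : Fin j → ℕ => (∑ i, a i) = l)).card)
    (K : ℕ) (hK : 3 ≤ K) :
    ((Λ (K - 2) : ℤ)) * (Λ 2 : ℤ)
      ≥ 2 * (Λ K : ℤ) - min ((Λ (K - 1) : ℤ)) ((Λ (K - 2) : ℤ)) := by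
  classical
  set S : ℕ → Finset (Fin j → ℕ) :=
    fun l => (Finset.Iic k).filter (fun a : Fin j → ℕ => (∑ i, a i) = l) with hS
  have hmemS : ∀ {l : ℕ} {a : Fin j → ℕ}, a ∈ S l ↔ (a ≤ k ∧ ∑ i, a i = l) := by
    intro l a
    rw [hS]
    simp [Finset.mem_filter, Finset.mem_Iic]
  -- the set of indices which can support a "singleton" solution
  set I : Finset (Fin j) := Finset.univ.filter (fun m => K ≤ k m) with hI
  set P : Finset (Fin j → ℕ) := I.image (fun m => sgl m K) with hP
  have hPcard : P.card = I.card := by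
    rw [hP]
    apply Finset.card_image_of_injOn
    intro m _ m' _ h
    exact sgl_inj (by omega) h
  have hPsub : P ⊆ S K := by
    intro a ha
    rw [hP] at ha
    obtain ⟨m, hm, rfl⟩ := Finset.mem_image.mp ha
    rw [hI] at hm
    simp only [Finset.mem_filter, Finset.mem_univ, true_and] at hm
    exact hmemS.mpr ⟨sgl_le hm, sgl_sum m K⟩
  -- injections I → S (K-1) and I → S (K-2)
  have hI1 : I.card ≤ (S (K - 1)).card := by
    apply Finset.card_le_card_of_injOn (fun m => sgl m (K - 1))
    · intro m hm
      rw [hI] at hm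
      simp only [Finset.mem_coe, Finset.mem_filter, Finset.mem_univ, true_and] at hm
      exact hmemS.mpr ⟨sgl_le (by omega), sgl_sum m (K - 1)⟩
    · intro m _ m' _ h
      exact sgl_inj (by omega) h
  have hI2 : I.card ≤ (S (K - 2)).card := by
    apply Finset.card_le_card_of_injOn (fun m => sgl m (K - 2))
    · intro m hm
      rw [hI] at hm
      simp only [Finset.mem_coe, Finset.mem_filter, Finset.mem_univ, true_and] at hm
      exact hmemS.mpr ⟨sgl_le (by omega), sgl_sum m (K - 2)⟩
    · intro m _ m' _ h
      exact sgl_inj (by omega) h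
  -- the double counting
  set T : Finset ((Fin j → ℕ) × (Fin j → ℕ)) :=
    ((S (K - 2)) ×ˢ (S 2)).filter (fun p => p.1 + p.2 ∈ S K) with hT
  set fib : (Fin j → ℕ) → Finset ((Fin j → ℕ) × (Fin j → ℕ)) :=
    fun a => T.filter (fun p => p.1 + p.2 = a) with hfib
  have hTcard : T.card = ∑ a ∈ S K, (fib a).card := by
    apply Finset.card_eq_sum_card_fiberwise
    intro p hp
    rw [hT] at hp
    exact (Finset.mem_filter.mp hp).2
  have hTle : T.card ≤ (S (K - 2)).card * (S 2).card := by
    calc T.card ≤ ((S (K - 2)) ×ˢ (S 2)).card := Finset.card_le_card (Finset.filter_subset _ _)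
    _ = (S (K - 2)).card * (S 2).card := Finset.card_product _ _
  -- membership of decompositions in fibers
  have hmemfib : ∀ {a b : Fin j → ℕ}, a ∈ S K → b ≤ a → (∑ i, b i) = 2 →
      (a - b, b) ∈ fib a := by
    intro a b ha hb hb2
    obtain ⟨hak, haK⟩ := hmemS.mp ha
    have hsub : a - b + b = a := by
      funext i
      exact Nat.sub_add_cancel (Pi.le_def.mp hb i)
    have hsum : (∑ i, (a - b) i) = K - 2 := by
      have := congrArg (fun f => ∑ i, f i) hsub
      simp only [Pi.add_apply, Finset.sum_add_distrib] at this
      omega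
    have h1 : a - b ∈ S (K - 2) := by
      refine hmemS.mpr ⟨?_, hsum⟩
      calc a - b ≤ a := by
            rw [Pi.le_def]; intro i; exact Nat.sub_le _ _
      _ ≤ k := hak
    have h2 : b ∈ S 2 := hmemS.mpr ⟨hb.trans hak, hb2⟩
    rw [hfib, hT]
    simp only [Finset.mem_filter, Finset.mem_product]
    exact ⟨⟨⟨h1, h2⟩, by rw [hsub]; exact ha⟩, hsub⟩
  -- fiber lower bounds
  have hfiblb : ∀ a ∈ S K, 2 ≤ (fib a).card + (if a ∈ P then 1 else 0) := by
    intro a ha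
    obtain ⟨hak, haK⟩ := hmemS.mp ha
    by_cases hmem : a ∈ P
    · rw [if_pos hmem]
      have h2 : (2 : ℕ) ≤ ∑ i, a i := by omega
      obtain ⟨b, hb, hb2⟩ := exists_le_sum a 2 h2
      have : 0 < (fib a).card := Finset.card_pos.mpr ⟨_, hmemfib ha hb hb2⟩
      omega
    · rw [if_neg hmem]
      -- a has at least two distinct nonzero coordinates
      have hex : ∃ i₁ i₂ : Fin j, i₁ ≠ i₂ ∧ a i₁ ≠ 0 ∧ a i₂ ≠ 0 := by
        by_contra hcon
        push_neg at hcon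
        have hex0 : ∃ m, a m ≠ 0 := by
          by_contra h0
          push_neg at h0
          have : (∑ i, a i) = 0 := Finset.sum_eq_zero fun i _ => h0 i
          omega
        obtain ⟨m, hm⟩ := hex0
        have haeq : a = sgl m (a m) := by
          funext i
          rcases eq_or_ne i m with rfl | h
          · rw [sgl_apply_self]
          · rw [sgl_apply_ne h]
            exact hcon m i (fun hc => h hc.symm) hm
        have hm' : a m = K := by
          rw [haeq, sgl_sum] at haK
          exact haK
        have : a ∈ P := by
          rw [hP]
          apply Finset.mem_image.mpr
          refine ⟨m, ?_, by rw [haeq, hm']⟩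
          rw [hI]
          simp only [Finset.mem_filter, Finset.mem_univ, true_and]
          have := Pi.le_def.mp hak m
          omega
        exact hmem this
      obtain ⟨i₁, i₂, hne, h1, h2⟩ := hex
      obtain ⟨b₁, b₂, hb12, hb1, hb2, hs1, hs2⟩ :=
        two_decomp a (by omega) i₁ i₂ hne h1 h2
      have hlt : 1 < (fib a).card := by
        rw [Finset.one_lt_card]
        refine ⟨(a - b₁, b₁), hmemfib ha hb1 hs1, (a - b₂, b₂), hmemfib ha hb2 hs2, ?_⟩
        intro h
        exact hb12 (congrArg Prod.snd h)
      omega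
  -- sum up
  have hsum2 : 2 * (S K).card ≤ ∑ a ∈ S K, ((fib a).card + (if a ∈ P then 1 else 0)) := by
    calc 2 * (S K).card = ∑ _a ∈ S K, 2 := by
          rw [Finset.sum_const, smul_eq_mul, mul_comm]
    _ ≤ _ := Finset.sum_le_sum hfiblb
  have hsplit : ∑ a ∈ S K, ((fib a).card + (if a ∈ P then 1 else 0))
      = (∑ a ∈ S K, (fib a).card) + ∑ a ∈ S K, (if a ∈ P then 1 else 0) :=
    Finset.sum_add_distrib
  have hind : (∑ a ∈ S K, (if a ∈ P then 1 else 0)) ≤ P.card := by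
    rw [← Finset.sum_filter]
    simp only [Finset.sum_const, smul_eq_mul, mul_one]
    exact Finset.card_le_card (fun x hx => (Finset.mem_filter.mp hx).2)
  -- main natural-number inequality
  have hmain : 2 * (S K).card ≤ (S (K - 2)).card * (S 2).card + I.card := by
    have := hsum2.trans (le_of_eq hsplit)
    have h' : (∑ a ∈ S K, (fib a).card) ≤ (S (K - 2)).card * (S 2).card :=
      hTcard ▸ hTle
    omega
  -- conclude over ℤ
  have e0 : Λ K = (S K).card := hΛ K
  have e1 : Λ (K - 1) = (S (K - 1)).card := hΛ (K - 1)
  have e2 : Λ (K - 2) = (S (K - 2)).card := hΛ (K - 2)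
  have e3 : Λ 2 = (S 2).card := hΛ 2
  rw [ge_iff_le, sub_le_iff_le_add]
  rcases le_total ((Λ (K - 1) : ℤ)) ((Λ (K - 2) : ℤ)) with h | h
  · rw [min_eq_left h]
    have hnat : 2 * Λ K ≤ Λ (K - 2) * Λ 2 + Λ (K - 1) := by
      rw [e0, e1, e2, e3]; omega
    have hint := Int.ofNat_le.mpr hnat
    push_cast at hint
    linarith
  · rw [min_eq_right h]
    have hnat : 2 * Λ K ≤ Λ (K - 2) * Λ 2 + Λ (K - 2) := by
      rw [e0, e2, e3]; omega
    have hint := Int.ofNat_le.mpr hnat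
    push_cast at hint
    linarith
end

section
/- For integers j, k, l with 2 = l and 3 ≤ k ≤ j, one has the identity l·(C(j,k−1)·C(j,l) − C(j,k)·C(j,l−1)) = C(j,k)·C(j,l−1)·(k−l)(j+1)/(j−k+1), and consequently the inequality 2·(C(j,k−1)·C(j,2) − C(j,k)·C(j,1)) ≥ 2·C(j,k) − C(j,k−1). -/
open Nat

/-- For `l = 2` and `3 ≤ k ≤ j`:
`l·(C(j,k−1)C(j,l) − C(j,k)C(j,l−1)) = C(j,k)C(j,l−1)·(k−l)(j+1)/(j−k+1)`,
and consequently `2(C(j,k−1)C(j,2) − C(j,k)C(j,1)) ≥ 2C(j,k) − C(j,k−1)`. -/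
theorem stmt13 (j k : ℕ) (hk : 3 ≤ k) (hkj : k ≤ j) :
    ((2 : ℚ) * ((Nat.choose j (k - 1) : ℚ) * (Nat.choose j 2 : ℚ)
        - (Nat.choose j k : ℚ) * (Nat.choose j 1 : ℚ))
      = (Nat.choose j k : ℚ) * (Nat.choose j 1 : ℚ)
          * (((k : ℚ) - 2) * ((j : ℚ) + 1)) / ((j : ℚ) - (k : ℚ) + 1))
    ∧ (2 : ℚ) * ((Nat.choose j (k - 1) : ℚ) * (Nat.choose j 2 : ℚ)
        - (Nat.choose j k : ℚ) * (Nat.choose j 1 : ℚ))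
      ≥ 2 * (Nat.choose j k : ℚ) - (Nat.choose j (k - 1) : ℚ) := by
  obtain ⟨d, rfl⟩ : ∃ d, j = k + d := ⟨j - k, by omega⟩
  have hkey : ((k + d).choose k : ℚ) * k = ((k + d).choose (k - 1) : ℚ) * (d + 1) := by
    have h := Nat.choose_succ_right_eq (k + d) (k - 1)
    have h1 : k - 1 + 1 = k := by omega
    have h2 : (k + d) - (k - 1) = d + 1 := by omega
    rw [h1, h2] at h
    exact_mod_cast h
  have h2c : ((k + d).choose 2 : ℚ) * 2 = ((k : ℚ) + d) * ((k : ℚ) + d - 1) := by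
    have h : (k + d).choose 2 * 2 = (k + d) * (k + d - 1) := by
      rw [Nat.choose_two_right]
      have : 2 ∣ (k + d) * (k + d - 1) := (Nat.even_mul_pred_self (k + d)).two_dvd
      omega
    have := congrArg (fun n : ℕ => (n : ℚ)) h
    push_cast at this
    rw [Nat.cast_sub (by omega)] at this
    push_cast at this
    linarith
  have h1c : ((k + d).choose 1 : ℚ) = (k : ℚ) + d := by
    rw [Nat.choose_one_right]; push_cast; ring
  have hden : ((k : ℚ) + d) - k + 1 = (d : ℚ) + 1 := by push_cast; ring
  have hdenpos : (0 : ℚ) < (d : ℚ) + 1 := by positivity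
  have hc0 : (0 : ℚ) ≤ ((k + d).choose k : ℚ) := by positivity
  have hk3 : (3 : ℚ) ≤ (k : ℚ) := by exact_mod_cast hk
  have hid : (2 : ℚ) * (((k + d).choose (k - 1) : ℚ) * ((k + d).choose 2 : ℚ)
        - ((k + d).choose k : ℚ) * ((k + d).choose 1 : ℚ))
      = ((k + d).choose k : ℚ) * ((k + d).choose 1 : ℚ)
          * (((k : ℚ) - 2) * (((k : ℚ) + d) + 1)) / (((k : ℚ) + d) - (k : ℚ) + 1) := by
    rw [hden, h1c, eq_div_iff (by linarith)]
    linear_combination (-2*((k + d).choose 2 : ℚ))*hkey + (((k + d).choose k : ℚ)*(k:ℚ))*h2c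
  refine ⟨by push_cast at hid ⊢; linarith [hid], ?_⟩
  have hineq : ((k + d).choose k : ℚ) * ((k : ℚ) + d)
      * (((k : ℚ) - 2) * (((k : ℚ) + d) + 1)) / ((d : ℚ) + 1)
      ≥ 2 * ((k + d).choose k : ℚ) - ((k + d).choose (k - 1) : ℚ) := by
    rw [ge_iff_le, le_div_iff₀ hdenpos]
    have hbr : (0:ℚ) ≤ ((k:ℚ) + d) * (((k : ℚ) - 2) * (((k : ℚ) + d) + 1)) - (2*((d:ℚ)+1) - k) := by
      nlinarith [hk3, Nat.cast_nonneg (α := ℚ) d]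
    nlinarith [hkey, mul_nonneg hc0 hbr]
  calc (2 : ℚ) * (((k + d).choose (k - 1) : ℚ) * ((k + d).choose 2 : ℚ)
        - ((k + d).choose k : ℚ) * ((k + d).choose 1 : ℚ))
      = ((k + d).choose k : ℚ) * ((k : ℚ) + d)
          * (((k : ℚ) - 2) * (((k : ℚ) + d) + 1)) / ((d : ℚ) + 1) := by
        rw [hid, hden, h1c]
    _ ≥ _ := hineq
end

section
/- Define Γ̃_{𝐤,k}(p) by: Γ̃ = 0 if d = 0 or k = 0; Γ̃_{𝐤,1}(p) = d(1 − 1/p); and for k ≥ 2, Γ̃_{𝐤,k}(p) = max( max_{1≤j≤d} Γ̃_{𝐤_{(j)},k}(p) + 1/p, Γ̃_{𝐤,k−1}(max(2, p·𝒦_{𝐤,k−1}/𝒦_{𝐤,k})) ). Define γ_{𝐤,k}(p) by γ = 0 if d = 0 or k = 0, else γ_{𝐤,k}(p) = max(d/2, d − 𝒦_{𝐤,k}/p, max_{1≤j≤d} γ_{𝐤_{(j)},k}(p) + 1/p). Then for all d, k ≥ 0 and 2 ≤ p < ∞, Γ̃_{𝐤,k}(p) ≥ γ_{𝐤,k}(p).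 -/
open Finset

/-- Homogeneous dimension `𝒦_{𝐤,k}` of the sublevel set
`{𝐚 ∈ ℕ^d : 𝐚 ≼ 𝐤, 1 ≤ |𝐚| ≤ k}`. -/
def Kdim (d : ℕ) (k : Fin d → ℕ) (K : ℕ) : ℕ :=
  ∑ a ∈ (Finset.Iic k).filter
      (fun a : Fin d → ℕ => 1 ≤ ∑ i, a i ∧ (∑ i, a i) ≤ K), ∑ i, a i

/-- The lower-bound exponent `γ_{𝐤,k}(p)` defined by the recursion
`γ = 0` for `d = 0` or `k = 0`, and otherwise
`γ_{𝐤,k}(p) = max(d/2, d − 𝒦_{𝐤,k}/p, max_j γ_{𝐤_{(j)},k}(p) + 1/p)`. -/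
noncomputable def gammaLB : (d : ℕ) → (Fin d → ℕ) → ℕ → ℝ → ℝ
  | 0, _, _, _ => 0
  | d + 1, k, K, p =>
    if K = 0 then 0 else
      max (max (((d : ℝ) + 1) / 2) (((d : ℝ) + 1) - (Kdim (d + 1) k K : ℝ) / p))
        (Finset.univ.sup' Finset.univ_nonempty
          (fun j : Fin (d + 1) => gammaLB d (k ∘ j.succAbove) K p + 1 / p))

/-- The exponent `Γ̃_{𝐤,k}(p)` from the decoupling proof:
`Γ̃ = 0` if `d = 0` or `k = 0`; `Γ̃_{𝐤,1}(p) = d(1 − 1/p)`; and for `k ≥ 2`,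
`Γ̃_{𝐤,k}(p) = max( max_j Γ̃_{𝐤_{(j)},k}(p) + 1/p,
Γ̃_{𝐤,k−1}(max(2, p·𝒦_{𝐤,k−1}/𝒦_{𝐤,k})) )`. -/
noncomputable def GammaT : (d : ℕ) → (Fin d → ℕ) → ℕ → ℝ → ℝ
  | 0, _, _, _ => 0
  | _ + 1, _, 0, _ => 0
  | d + 1, k, 1, p => ((d : ℝ) + 1) * (1 - 1 / p)
  | d + 1, k, m + 2, p =>
    max
      (Finset.univ.sup' Finset.univ_nonempty
        (fun j : Fin (d + 1) => GammaT d (k ∘ j.succAbove) (m + 2) p + 1 / p))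
      (GammaT (d + 1) k (m + 1)
        (max 2 (p * (Kdim (d + 1) k (m + 1) : ℝ) / (Kdim (d + 1) k (m + 2) : ℝ))))
  termination_by d _ K _ => (d, K)
  decreasing_by
    · exact Prod.Lex.left _ _ (by omega)
    · exact Prod.Lex.right _ (by omega)

lemma Kdim_mono (d : ℕ) (k : Fin d → ℕ) {K₁ K₂ : ℕ} (h : K₁ ≤ K₂) :
    Kdim d k K₁ ≤ Kdim d k K₂ := by
  unfold Kdim
  apply Finset.sum_le_sum_of_subset
  intro a ha
  simp only [Finset.mem_filter] at ha ⊢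
  exact ⟨ha.1, ha.2.1, ha.2.2.trans h⟩

lemma le_Kdim (d : ℕ) (k : Fin d → ℕ) (hk : ∀ i, 0 < k i) (K : ℕ) (hK : 1 ≤ K) :
    d ≤ Kdim d k K := by
  classical
  unfold Kdim
  have hmem : ∀ i : Fin d, (Pi.single i 1 : Fin d → ℕ) ∈ (Finset.Iic k).filter
      (fun a : Fin d → ℕ => 1 ≤ ∑ j, a j ∧ (∑ j, a j) ≤ K) := by
    intro i
    simp only [Finset.mem_filter, Finset.mem_Iic]
    refine ⟨Pi.le_def.mpr fun j => ?_, ?_, ?_⟩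
    · rcases eq_or_ne j i with rfl | h
      · simpa using Nat.succ_le_of_lt (hk j)
      · simp [Pi.single_eq_of_ne h]
    · rw [Finset.sum_pi_single']; simp
    · rw [Finset.sum_pi_single']; simpa using hK
  have hinj : ∀ x ∈ (Finset.univ : Finset (Fin d)), ∀ y ∈ Finset.univ,
      (Pi.single x 1 : Fin d → ℕ) = Pi.single y 1 → x = y := by
    intro x _ y _ hxy
    by_contra hne
    have := congrFun hxy x
    rw [Pi.single_eq_same, Pi.single_eq_of_ne hne] at this
    exact one_ne_zero this
  have hsub : (Finset.univ.image (fun i : Fin d => (Pi.single i 1 : Fin d → ℕ))) ⊆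
      (Finset.Iic k).filter (fun a : Fin d → ℕ => 1 ≤ ∑ j, a j ∧ (∑ j, a j) ≤ K) := by
    intro a ha
    simp only [Finset.mem_image, Finset.mem_univ, true_and] at ha
    obtain ⟨i, rfl⟩ := ha
    exact hmem i
  calc d = ∑ a ∈ Finset.univ.image (fun i : Fin d => (Pi.single i 1 : Fin d → ℕ)), ∑ j, a j := by
        rw [Finset.sum_image hinj]
        simp [Finset.sum_pi_single']
    _ ≤ _ := Finset.sum_le_sum_of_subset hsub

lemma GammaT_one (d : ℕ) (k : Fin d → ℕ) (p : ℝ) : GammaT d k 1 p = d * (1 - 1 / p) := by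
  cases d with
  | zero => simp [GammaT]
  | succ d => rw [GammaT]; push_cast; ring

lemma main_aux : ∀ n : ℕ, ∀ d : ℕ, ∀ k : Fin d → ℕ, (∀ i, 0 < k i) → ∀ K : ℕ,
    d + K ≤ n → ∀ p : ℝ, 2 ≤ p → gammaLB d k K p ≤ GammaT d k K p := by
  intro n
  induction n with
  | zero =>
    intro d k hk K hn p hp
    obtain ⟨rfl, rfl⟩ : d = 0 ∧ K = 0 := by omega
    simp [gammaLB, GammaT]
  | succ n ih =>
    intro d k hk K hn p hp
    have hp0 : (0:ℝ) < p := lt_of_lt_of_le two_pos hp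
    have hpinv : 1 / p ≤ 1 - 1 / p := by
      have := one_div_le_one_div_of_le two_pos hp
      linarith
    match d, K with
    | 0, K => simp [gammaLB, GammaT]
    | d + 1, 0 => simp [gammaLB, GammaT]
    | d + 1, 1 =>
      rw [GammaT_one, gammaLB, if_neg one_ne_zero]
      have hKd : ((d:ℝ) + 1) ≤ (Kdim (d + 1) k 1 : ℝ) := by
        exact_mod_cast le_Kdim (d + 1) k hk 1 le_rfl
      push_cast
      refine max_le (max_le ?_ ?_) ?_
      · nlinarith [Nat.cast_nonneg (α := ℝ) d]
      · have : ((d:ℝ) + 1) / p ≤ (Kdim (d + 1) k 1 : ℝ) / p := by gcongr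
        have hexp : ((d:ℝ) + 1) * (1 - 1 / p) = ((d:ℝ) + 1) - ((d:ℝ) + 1) / p := by
          field_simp
        rw [hexp]; linarith
      · apply Finset.sup'_le
        intro j _
        have h1 := ih d (k ∘ j.succAbove) (fun i => hk _) 1 (by omega) p hp
        rw [GammaT_one] at h1
        have := Nat.cast_nonneg (α := ℝ) d
        calc gammaLB d (k ∘ j.succAbove) 1 p + 1 / p ≤ (d:ℝ) * (1 - 1/p) + 1/p := by linarith
          _ ≤ ((d:ℝ) + 1) * (1 - 1/p) := by nlinarith
    | d + 1, m + 2 =>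
      rw [GammaT]
      set p' := max 2 (p * (Kdim (d + 1) k (m + 1) : ℝ) / (Kdim (d + 1) k (m + 2) : ℝ)) with hp'def
      have hp' : (2:ℝ) ≤ p' := le_max_left _ _
      have hp'0 : (0:ℝ) < p' := lt_of_lt_of_le two_pos hp'
      set A := (Kdim (d + 1) k (m + 1) : ℝ) with hAdef
      set B := (Kdim (d + 1) k (m + 2) : ℝ) with hBdef
      have hA : ((d:ℝ) + 1) ≤ A := by
        show ((d:ℝ) + 1) ≤ ((Kdim (d + 1) k (m + 1) : ℕ) : ℝ)
        exact_mod_cast le_Kdim (d + 1) k hk (m + 1) (by omega)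
      have hB : ((d:ℝ) + 1) ≤ B := by
        show ((d:ℝ) + 1) ≤ ((Kdim (d + 1) k (m + 2) : ℕ) : ℝ)
        exact_mod_cast le_Kdim (d + 1) k hk (m + 2) (by omega)
      have hd0 : (0:ℝ) < (d:ℝ) + 1 := by positivity
      have hA0 : (0:ℝ) < A := lt_of_lt_of_le hd0 hA
      have hB0 : (0:ℝ) < B := lt_of_lt_of_le hd0 hB
      have hkey : A / p' ≤ B / p := by
        rw [div_le_div_iff₀ hp'0 hp0]
        rcases le_total (p * A / B) 2 with h | h
        · rw [hp'def, max_eq_left h]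
          have := (div_le_iff₀ hB0).mp h
          nlinarith
        · rw [hp'def, max_eq_right h]
          have hBne : B ≠ 0 := ne_of_gt hB0
          have : B * (p * A / B) = p * A := by field_simp
          rw [this]; exact le_of_eq (mul_comm A p)
      have hrec : gammaLB (d + 1) k (m + 1) p' ≤ GammaT (d + 1) k (m + 1) p' :=
        ih (d + 1) k hk (m + 1) (by omega) p' hp'
      have hglb : gammaLB (d + 1) k (m + 1) p' =
          max (max (((d:ℝ) + 1) / 2) (((d:ℝ) + 1) - A / p'))
            (Finset.univ.sup' Finset.univ_nonempty
              (fun j : Fin (d + 1) => gammaLB d (k ∘ j.succAbove) (m + 1) p' + 1 / p')) := by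
        rw [gammaLB, if_neg (by omega : ¬ (m + 1 = 0))]
      rw [gammaLB, if_neg (by omega : ¬ (m + 2 = 0))]
      refine max_le (max_le ?_ ?_) ?_
      · refine le_trans ?_ (le_max_right _ _)
        refine le_trans ?_ hrec
        rw [hglb]
        exact le_trans (le_max_left _ _) (le_max_left _ _)
      · refine le_trans ?_ (le_max_right _ _)
        refine le_trans ?_ hrec
        rw [hglb]
        refine le_trans ?_ (le_trans (le_max_right _ _) (le_max_left _ _))
        have : (B : ℝ) / p ≥ A / p' := hkey
        rw [← hBdef]
        linarith
      · apply Finset.sup'_le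
        intro j _
        refine le_trans ?_ (le_max_left _ _)
        have h1 := ih d (k ∘ j.succAbove) (fun i => hk _) (m + 2) (by omega) p hp
        refine le_trans (add_le_add h1 le_rfl) ?_
        exact Finset.le_sup' (fun j : Fin (d + 1) => GammaT d (k ∘ j.succAbove) (m + 2) p + 1 / p) (Finset.mem_univ j)

/-- `Γ̃_{𝐤,k}(p) ≥ γ_{𝐤,k}(p)` for all `d, k ≥ 0` and `2 ≤ p < ∞`. -/
theorem stmt16 (d : ℕ) (k : Fin d → ℕ) (hk : ∀ i, 0 < k i)
    (K : ℕ) (p : ℝ) (hp : 2 ≤ p) :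
    gammaLB d k K p ≤ GammaT d k K p :=
  main_aux (d + K) d k hk K le_rfl p hp
end

section
/- Assume k₁ ≤ ⋯ ≤ k_d and k ≥ 2, and let Λ_{j,l} be the number of 𝐚 ∈ ℕ^j with 𝐚 ≼ (k₁,…,k_j) and |𝐚| = l. Then for 1 ≤ l ≤ k−1 and 1 ≤ j < d, Λ_{j+1,k}·Λ_{j,l} − Λ_{j,k}·Λ_{j+1,l} ≥ 0. -/
open Finset

/-- The level-set count in `j` dimensions:
`Λ_{j,l} = #{𝐚 ∈ ℕ^j : 𝐚 ≼ (k₁,…,k_j), |𝐚| = l}`. -/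
def levelCount (d : ℕ) (k : Fin d → ℕ) (j : ℕ) (hj : j ≤ d) (l : ℕ) : ℕ :=
  ((Finset.Iic (fun i : Fin j => k (Fin.castLE hj i))).filter
    (fun a : Fin j → ℕ => (∑ i, a i) = l)).card

def SP (f : ℤ → ℕ) : Prop :=
  ∀ ⦃x u v y : ℤ⦄, x ≤ u → u ≤ v → v ≤ y → u + v = x + y → f x * f y ≤ f u * f v

lemma SP.pair {f : ℤ → ℕ} (hf : SP f) {x y u v : ℤ} (h1 : x ≤ u) (h2 : x ≤ v)
    (h3 : u ≤ y) (h4 : v ≤ y) (hs : u + v = x + y) : f x * f y ≤ f u * f v := by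
  rcases le_total u v with h | h
  · exact hf h1 h h4 hs
  · rw [mul_comm (f u)]
    exact hf h2 h h3 (by omega)

def sigK (K : ℤ) (p : ℤ × ℤ) : ℤ × ℤ :=
  if p.2 = 0 then (0, p.1) else if p.1 = K then (p.2, K) else (p.1 + 1, p.2 - 1)

def tauK (K : ℤ) (q : ℤ × ℤ) : ℤ × ℤ :=
  if q.1 = 0 then (q.2, 0) else if q.2 = K then (K, q.1) else (q.1 - 1, q.2 + 1)

lemma conv_step {f : ℤ → ℕ} (hf : SP f) (K : ℤ) {m n : ℤ} (hmn : m ≤ n) :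
    (∑ i ∈ Icc (0:ℤ) K, f (m - 1 - i)) * (∑ i ∈ Icc (0:ℤ) K, f (n + 1 - i)) ≤
    (∑ i ∈ Icc (0:ℤ) K, f (m - i)) * (∑ i ∈ Icc (0:ℤ) K, f (n - i)) := by
  classical
  rw [Finset.sum_mul_sum, Finset.sum_mul_sum, ← Finset.sum_product', ← Finset.sum_product']
  set s : Finset (ℤ × ℤ) := Icc (0:ℤ) K ×ˢ Icc (0:ℤ) K with hs
  have hresum :
      ∑ p ∈ s, f (m - (sigK K p).1) * f (n - (sigK K p).2)
        = ∑ p ∈ s, f (m - p.1) * f (n - p.2) := by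
    apply Finset.sum_nbij' (i := sigK K) (j := tauK K)
    · intro p hp
      simp only [hs, Finset.mem_product, Finset.mem_Icc] at hp ⊢
      simp only [sigK]; split_ifs <;> simp <;> omega
    · intro q hq
      simp only [hs, Finset.mem_product, Finset.mem_Icc] at hq ⊢
      simp only [tauK]; split_ifs <;> simp <;> omega
    · intro p hp
      simp only [hs, Finset.mem_product, Finset.mem_Icc] at hp
      simp only [sigK, tauK]
      split_ifs <;> (try rfl) <;> (ext <;> simp <;> omega)
    · intro q hq
      simp only [hs, Finset.mem_product, Finset.mem_Icc] at hq
      simp only [sigK, tauK]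
      split_ifs <;> (try rfl) <;> (ext <;> simp <;> omega)
    · intro p hp; rfl
  rw [← hresum]
  apply Finset.sum_le_sum
  intro p hp
  simp only [hs, Finset.mem_product, Finset.mem_Icc] at hp
  simp only [sigK]
  split_ifs with h1 h2
  · -- p.2 = 0 : σ p = (0, p.1)
    simp only [h1]
    -- f (m-1-p.1) * f (n+1-0) ≤ f (m-0) * f (n-p.1)
    have := hf.pair (x := m - 1 - p.1) (y := n + 1 - 0) (u := m - 0) (v := n - p.1)
      (by omega) (by omega) (by omega) (by omega) (by omega)
    simpa using this
  · -- p.1 = K, p.2 ≥ 1 : σ p = (p.2, K)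
    exact hf.pair (by omega) (by omega) (by omega) (by omega) (by omega)
  · -- interior: equal terms
    have e1 : m - 1 - p.1 = m - (p.1 + 1) := by ring
    have e2 : n + 1 - p.2 = n - (p.2 - 1) := by ring
    rw [e1, e2]

lemma conv_sp {f : ℤ → ℕ} (hf : SP f) (K : ℤ) :
    SP (fun m => ∑ i ∈ Icc (0:ℤ) K, f (m - i)) := by
  intro x u v y h1 h2 h3 h4
  simp only
  have main : ∀ t : ℕ, ∀ u v : ℤ, x ≤ u → u ≤ v → v ≤ y → u + v = x + y →
      u - x = (t:ℤ) →
      (∑ i ∈ Icc (0:ℤ) K, f (x - i)) * (∑ i ∈ Icc (0:ℤ) K, f (y - i)) ≤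
      (∑ i ∈ Icc (0:ℤ) K, f (u - i)) * (∑ i ∈ Icc (0:ℤ) K, f (v - i)) := by
    intro t
    induction t with
    | zero =>
      intro u v h1 h2 h3 h4 ht
      have hx : x = u := by omega
      have hy : y = v := by omega
      subst hx; subst hy; exact le_refl _
    | succ t ih =>
      intro u v h1 h2 h3 h4 ht
      calc (∑ i ∈ Icc (0:ℤ) K, f (x - i)) * (∑ i ∈ Icc (0:ℤ) K, f (y - i))
          ≤ (∑ i ∈ Icc (0:ℤ) K, f (u - 1 - i)) * (∑ i ∈ Icc (0:ℤ) K, f (v + 1 - i)) := by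
            have := ih (u - 1) (v + 1) (by omega) (by omega) (by omega) (by omega) (by omega)
            convert this using 3 <;> ring
        _ ≤ _ := conv_step hf K h2
  exact main (u - x).toNat u v h1 h2 h3 h4 (by omega)

lemma levelCount_zero (d : ℕ) (k : Fin d → ℕ) (hj : 0 ≤ d) (l : ℕ) :
    levelCount d k 0 hj l = if l = 0 then 1 else 0 := by
  unfold levelCount
  rcases eq_or_ne l 0 with h | h <;> simp [h, Finset.filter_true_of_mem, Finset.filter_false_of_mem]
  · rw [Finset.card_eq_one]
    exact ⟨_, Finset.eq_singleton_iff_unique_mem.mpr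
      ⟨Finset.mem_Iic.mpr le_rfl, fun a _ => funext fun i => i.elim0⟩⟩
  · omega

lemma levelCount_succ (d : ℕ) (k : Fin d → ℕ) (j : ℕ) (hj : j + 1 ≤ d) (m : ℕ) :
    levelCount d k (j+1) hj m =
      ∑ i ∈ Finset.range (k (Fin.castLE hj (Fin.last j)) + 1),
        (if i ≤ m then levelCount d k j (Nat.le_of_succ_le hj) (m - i) else 0) := by
  classical
  unfold levelCount
  rw [Finset.card_eq_sum_card_fiberwise
    (f := fun a : Fin (j+1) → ℕ => a (Fin.last j))
    (t := Finset.range (k (Fin.castLE hj (Fin.last j)) + 1))]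
  · apply Finset.sum_congr rfl
    intro i hi
    rw [Finset.filter_filter]
    split_ifs with him
    · apply Finset.card_nbij' (i := fun a => Fin.init a) (j := fun b => Fin.snoc b i)
      · intro a ha
        simp only [Finset.mem_coe, Finset.mem_filter, Finset.mem_Iic] at ha ⊢
        obtain ⟨hle, hsum, hlast⟩ := ha
        refine ⟨fun t => hle (Fin.castSucc t), ?_⟩
        rw [Fin.sum_univ_castSucc] at hsum
        simp only [Fin.init]
        omega
      · intro b hb
        simp only [Finset.mem_coe, Finset.mem_filter, Finset.mem_Iic] at hb ⊢
        obtain ⟨hle, hsum⟩ := hb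
        refine ⟨fun t => ?_, ?_, ?_⟩
        · refine Fin.lastCases ?_ (fun t' => ?_) t
          · simpa [Fin.snoc_last] using Nat.lt_succ_iff.mp (Finset.mem_range.mp hi)
          · simpa [Fin.snoc_castSucc] using hle t'
        · rw [Fin.sum_univ_castSucc]
          simp only [Fin.snoc_castSucc, Fin.snoc_last]
          omega
        · simp [Fin.snoc_last]
      · intro a ha
        simp only [Finset.mem_coe, Finset.mem_filter] at ha
        rw [← ha.2.2]; exact Fin.snoc_init_self a
      · intro b hb
        simp
    · rw [Finset.card_eq_zero, Finset.filter_eq_empty_iff]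
      intro a _
      rintro ⟨hsum, hlast⟩
      apply him
      rw [← hsum, Fin.sum_univ_castSucc, hlast]
      omega
  · intro a ha
    simp only [Finset.mem_coe, Finset.mem_filter, Finset.mem_Iic] at ha
    exact Finset.mem_range.mpr (Nat.lt_succ_of_le (ha.1 (Fin.last j)))

def Lf (d : ℕ) (k : Fin d → ℕ) (j : ℕ) (hj : j ≤ d) : ℤ → ℕ :=
  fun m => if 0 ≤ m then levelCount d k j hj m.toNat else 0

lemma Lf_succ (d : ℕ) (k : Fin d → ℕ) (j : ℕ) (hj : j + 1 ≤ d) (m : ℤ) :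
    Lf d k (j+1) hj m =
      ∑ i ∈ Icc (0:ℤ) (k (Fin.castLE hj (Fin.last j)) : ℤ),
        Lf d k j (Nat.le_of_succ_le hj) (m - i) := by
  classical
  rcases lt_or_ge m 0 with hm | hm
  · rw [Lf, if_neg (by omega)]
    symm
    apply Finset.sum_eq_zero
    intro i hi
    rw [Finset.mem_Icc] at hi
    rw [Lf, if_neg (by omega)]
  · rw [Lf, if_pos hm, levelCount_succ d k j hj]
    apply Finset.sum_nbij' (i := fun i : ℕ => (i : ℤ)) (j := Int.toNat)
    · intro a ha
      simp only [Finset.mem_range] at ha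
      simp only [Finset.mem_Icc]
      omega
    · intro a ha
      simp only [Finset.mem_Icc] at ha
      simp only [Finset.mem_range]
      omega
    · intro a _; simp
    · intro a ha
      simp only [Finset.mem_Icc] at ha
      omega
    · intro a ha
      simp only [Finset.mem_range] at ha
      rw [Lf]
      split_ifs with h1 h2
      · congr 1
        omega
      · omega
      · omega
      · rfl

lemma sp_Lf (d : ℕ) (k : Fin d → ℕ) : ∀ j (hj : j ≤ d), SP (Lf d k j hj) := by
  intro j
  induction j with
  | zero =>
    intro hj x u v y h1 h2 h3 h4
    simp only [Lf, levelCount_zero]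
    rcases le_or_gt 0 x with hx | hx
    · rcases eq_or_ne x 0 with rfl | hx0
      · rcases eq_or_ne y 0 with rfl | hy0
        · have hu : u = 0 := by omega
          have hv : v = 0 := by omega
          subst hu; subst hv; simp
        · rw [if_pos le_rfl]
          have : ¬ (y.toNat = 0) ∨ ¬ (0 ≤ y) := by omega
          rcases this with h | h
          · split_ifs <;> simp_all
          · rw [if_neg h]; simp
      · have : ¬ (x.toNat = 0) ∨ ¬ (0 ≤ x) := by
          rcases eq_or_ne x 0 with rfl | h; · simp_all
          · omega
        rcases this with h | h
        · split_ifs <;> simp_all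
        · rw [if_neg h]; simp
    · rw [if_neg (by omega)]; simp
  | succ j ih =>
    intro hj x u v y h1 h2 h3 h4
    have key := conv_sp (ih (Nat.le_of_succ_le hj)) (k (Fin.castLE hj (Fin.last j)) : ℤ) h1 h2 h3 h4
    simpa only [← Lf_succ d k j hj] using key


/-- For `k₁ ≤ ⋯ ≤ k_d`, `k ≥ 2`, `1 ≤ l ≤ k−1` and `1 ≤ j < d`:
`Λ_{j+1,k}·Λ_{j,l} − Λ_{j,k}·Λ_{j+1,l} ≥ 0`. -/
theorem stmt17 (d : ℕ) (k : Fin d → ℕ) (hmono : Monotone k)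
    (K : ℕ) (hK : 2 ≤ K) (l : ℕ) (hl : 1 ≤ l) (hlK : l ≤ K - 1)
    (j : ℕ) (hj1 : 1 ≤ j) (hjd : j < d) :
    (0 : ℤ) ≤ (levelCount d k (j + 1) hjd K : ℤ) * (levelCount d k j hjd.le l : ℤ)
      - (levelCount d k j hjd.le K : ℤ) * (levelCount d k (j + 1) hjd l : ℤ) := by
  have hj1d : j ≤ d := hjd.le
  have key : levelCount d k j hj1d K * levelCount d k (j+1) hjd l ≤
      levelCount d k (j+1) hjd K * levelCount d k j hj1d l := by
    have hKf : ∀ m : ℕ, levelCount d k j hj1d m = Lf d k j hj1d (m : ℤ) := by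
      intro m; simp [Lf]
    have hKg : ∀ m : ℕ, levelCount d k (j+1) hjd m = Lf d k (j+1) hjd (m : ℤ) := by
      intro m; simp [Lf]
    rw [hKf, hKf, hKg, hKg, Lf_succ, Lf_succ]
    rw [Finset.mul_sum, Finset.sum_mul]
    apply Finset.sum_le_sum
    intro i hi
    rw [Finset.mem_Icc] at hi
    rw [mul_comm (Lf d k j hj1d (K:ℤ))]
    exact (sp_Lf d k j hj1d).pair (by omega) (by omega) (by omega) (by omega) (by omega)
  zify at key
  linarith
end
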